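/- arXiv:1005.1726 — 2 statements merged into one kernel-verified Lean document; each statement's English description precedes it below -/
import Mathlib

section
/- Let G = (V,E) be a finite simple graph and let G^1 = (V^1, E^1), G^2 = (V^2, E^2) be subgraphs of G with E = E^1 ∪ E^2, E^1 ∩ E^2 = ∅ and V = V^1 ∪ V^2. If V^1 ∩ V^2 = ∅, then Q(G,x) = Q(G^1,x)·Q(G^2,x); if V^1 ∩ V^2 = {v} is a single vertex (an articulation vertex), then x·Q(G,x) = Q(G^1,x)·Q(G^2,x). -/
open Finset

variable {V : Type*} [Fintype V] [DecidableEq V]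

/-- `P` is a set partition of the vertex set `V`, given as a finset of (nonempty,
pairwise disjoint, covering) blocks. -/
def IsPartition (P : Finset (Finset V)) : Prop :=
  ∅ ∉ P ∧ ∀ v : V, ∃! B : Finset V, B ∈ P ∧ v ∈ B

/-- `P` is a connected set partition of `G`: every block induces a connected subgraph. -/
def IsConnPartition (G : SimpleGraph V) (P : Finset (Finset V)) : Prop :=
  IsPartition P ∧ ∀ B ∈ P, (G.induce (B : Set V)).Connected

open scoped Classical in
/-- The finset of all connected set partitions (`Π_c(G)`). -/
noncomputable def connParts (G : SimpleGraph V) : Finset (Finset (Finset V)) :=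
  Finset.univ.filter (IsConnPartition G)

open scoped Classical in
/-- The partition polynomial `Q(G,x) = Σ_{π ∈ Π_c(G)} x^{|π|}`, evaluated at `x : ℤ`. -/
noncomputable def Q (G : SimpleGraph V) (x : ℤ) : ℤ :=
  ∑ P ∈ connParts G, x ^ P.card


lemma mem_connParts {G : SimpleGraph V} {P : Finset (Finset V)} :
    P ∈ connParts G ↔ IsConnPartition G P := by
  classical
  simp [connParts]

/-- `P` is a connected set partition of the part of `H` on vertex set `S`. -/
def IsCP (H : SimpleGraph V) (S : Finset V) (P : Finset (Finset V)) : Prop :=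
  (∀ B ∈ P, B ⊆ S) ∧ ∅ ∉ P ∧ (∀ v ∈ S, ∃! B : Finset V, B ∈ P ∧ v ∈ B) ∧
    ∀ B ∈ P, (H.induce (B : Set V)).Connected

open scoped Classical in
noncomputable def cp (H : SimpleGraph V) (S : Finset V) : Finset (Finset (Finset V)) :=
  Finset.univ.filter (IsCP H S)

lemma mem_cp {H : SimpleGraph V} {S : Finset V} {P : Finset (Finset V)} :
    P ∈ cp H S ↔ IsCP H S P := by
  classical
  simp [cp]

noncomputable def down (S : Finset V) (B' : Finset ↥(S : Set V)) : Finset V :=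
  B'.map (Function.Embedding.subtype _)

lemma mem_down {S : Finset V} {B' : Finset ↥(S : Set V)} {y : V} :
    y ∈ down S B' ↔ ∃ h : y ∈ (S : Set V), (⟨y, h⟩ : ↥(S : Set V)) ∈ B' := by
  simp only [down, Finset.mem_map, Function.Embedding.coe_subtype]
  constructor
  · rintro ⟨⟨a, ha⟩, haB, rfl⟩; exact ⟨ha, haB⟩
  · rintro ⟨h, hB⟩; exact ⟨⟨y, h⟩, hB, rfl⟩

noncomputable def induceInduceIso (H : SimpleGraph V) (S : Finset V)
    (B' : Finset ↥(S : Set V)) :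
    (H.induce (S : Set V)).induce ((B' : Set ↥(S : Set V))) ≃g
      H.induce ((down S B' : Finset V) : Set V) where
  toFun x := ⟨x.1.1, by
    have := x.2
    simp only [Finset.mem_coe] at this ⊢
    exact mem_down.2 ⟨x.1.2, by simpa using this⟩⟩
  invFun y := by
    have hy := y.2
    simp only [Finset.mem_coe, mem_down] at hy
    exact ⟨⟨y.1, hy.choose⟩, by simpa using hy.choose_spec⟩
  left_inv x := by
    ext
    rfl
  right_inv y := by
    ext
    rfl
  map_rel_iff' := Iff.rfl

lemma induce_induce_connected_iff (H : SimpleGraph V) (S : Finset V)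
    (B' : Finset ↥(S : Set V)) :
    ((H.induce (S : Set V)).induce ((B' : Set ↥(S : Set V)))).Connected ↔
      (H.induce ((down S B' : Finset V) : Set V)).Connected :=
  (induceInduceIso H S B').connected_iff

noncomputable def up (S : Finset V) (B : Finset V) : Finset ↥(S : Set V) :=
  B.subtype (· ∈ (S : Set V))

lemma mem_up {S B : Finset V} {a : ↥(S : Set V)} : a ∈ up S B ↔ a.1 ∈ B :=
  Finset.mem_subtype

lemma up_down {S : Finset V} (B' : Finset ↥(S : Set V)) : up S (down S B') = B' := by
  ext a
  rw [mem_up, mem_down]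
  constructor
  · rintro ⟨h, hB⟩
    convert hB
  · intro h
    exact ⟨a.2, by convert h⟩

lemma down_up {S B : Finset V} (hBS : B ⊆ S) : down S (up S B) = B := by
  rw [down, up, Finset.subtype_map]
  exact Finset.filter_true_of_mem (fun b hb => by simpa using hBS hb)

lemma down_subset {S : Finset V} (B' : Finset ↥(S : Set V)) : down S B' ⊆ S := by
  intro y hy
  obtain ⟨h, -⟩ := mem_down.1 hy
  simpa using h

lemma down_injective {S : Finset V} : Function.Injective (down S) :=
  fun _ _ h => Finset.map_injective _ h

lemma down_eq_empty {S : Finset V} {B' : Finset ↥(S : Set V)} :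
    down S B' = ∅ ↔ B' = ∅ := Finset.map_eq_empty

lemma Q_induce (H : SimpleGraph V) (S : Finset V) (x : ℤ) :
    Q (H.induce (S : Set V)) x = ∑ P ∈ cp H S, x ^ P.card := by
  classical
  unfold Q
  refine Finset.sum_nbij' (i := fun P' => P'.image (down S)) (j := fun P => P.image (up S))
    ?_ ?_ ?_ ?_ ?_
  · -- maps into cp H S
    intro P' hP'
    obtain ⟨⟨hne, huniq⟩, hconn⟩ := mem_connParts.1 hP'
    refine mem_cp.2 ⟨?_, ?_, ?_, ?_⟩
    · intro B hB
      obtain ⟨B', hB', rfl⟩ := Finset.mem_image.1 hB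
      exact down_subset B'
    · intro h
      obtain ⟨B', hB', hBe⟩ := Finset.mem_image.1 h
      exact hne (down_eq_empty.1 hBe ▸ hB')
    · intro v hv
      obtain ⟨B', ⟨hB'P, hvB'⟩, hu⟩ := huniq ⟨v, by simpa using hv⟩
      refine ⟨down S B', ⟨Finset.mem_image_of_mem _ hB'P, mem_down.2 ⟨by simpa using hv, hvB'⟩⟩, ?_⟩
      rintro C ⟨hCP, hvC⟩
      obtain ⟨C', hC'P, rfl⟩ := Finset.mem_image.1 hCP
      obtain ⟨h1, h2⟩ := mem_down.1 hvC
      exact congrArg (down S) (hu C' ⟨hC'P, h2⟩)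
    · intro B hB
      obtain ⟨B', hB', rfl⟩ := Finset.mem_image.1 hB
      exact (induce_induce_connected_iff H S B').1 (hconn B' hB')
  · -- maps back into connParts
    intro P hP
    obtain ⟨hsub, hne, huniq, hconn⟩ := mem_cp.1 hP
    refine mem_connParts.2 ⟨⟨?_, ?_⟩, ?_⟩
    · intro h
      obtain ⟨B, hBP, hBe⟩ := Finset.mem_image.1 h
      have hB : B = ∅ := by rw [← down_up (hsub B hBP), hBe]; simp [down]
      exact hne (hB ▸ hBP)
    · rintro ⟨v, hv⟩
      obtain ⟨B, ⟨hBP, hvB⟩, hu⟩ := huniq v (by simpa using hv)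
      refine ⟨up S B, ⟨Finset.mem_image_of_mem _ hBP, mem_up.2 hvB⟩, ?_⟩
      rintro C' ⟨hC'P, hvC'⟩
      obtain ⟨C, hCP, rfl⟩ := Finset.mem_image.1 hC'P
      exact congrArg (up S) (hu C ⟨hCP, mem_up.1 hvC'⟩)
    · intro B' hB'
      obtain ⟨B, hBP, rfl⟩ := Finset.mem_image.1 hB'
      have := (induce_induce_connected_iff H S (up S B))
      rw [down_up (hsub B hBP)] at this
      exact this.2 (hconn B hBP)
  · intro P' hP'
    show Finset.image (up S) (Finset.image (down S) P') = P'
    rw [Finset.image_image]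
    have : ∀ B' ∈ P', (up S ∘ down S) B' = id B' := fun B' _ => up_down B'
    rw [Finset.image_congr this, Finset.image_id]
  · intro P hP
    obtain ⟨hsub, _, _, _⟩ := mem_cp.1 hP
    show Finset.image (down S) (Finset.image (up S) P) = P
    rw [Finset.image_image]
    have : ∀ B ∈ P, (down S ∘ up S) B = id B := fun B hB => down_up (hsub B hB)
    rw [Finset.image_congr this, Finset.image_id]
  · intro P' hP'
    rw [Finset.card_image_of_injective _ down_injective]
def within (H : SimpleGraph V) (B : Finset V) : SimpleGraph V where
  Adj u w := u ∈ B ∧ w ∈ B ∧ H.Adj u w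
  symm := ⟨fun u w ⟨hu, hw, h⟩ => ⟨hw, hu, h.symm⟩⟩
  loopless := ⟨fun u ⟨_, _, h⟩ => H.loopless.irrefl u h⟩

lemma within_reachable_of_walk {H : SimpleGraph V} {B : Finset V} {u w : V}
    (p : (within H B).Walk u w) (hu : u ∈ B) :
    ∀ (hw : w ∈ B), (H.induce (B : Set V)).Reachable ⟨u, by simpa using hu⟩ ⟨w, by simpa using hw⟩ := by
  induction p with
  | nil => intro hw; rfl
  | @cons a b c h q ih =>
    intro hw
    obtain ⟨ha, hb, hadj⟩ := h
    exact (SimpleGraph.Adj.reachable (by exact hadj :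
      (H.induce (B : Set V)).Adj ⟨a, by simpa using ha⟩ ⟨b, by simpa using hb⟩)).trans (ih hb hw)

lemma induce_connected_iff_within {H : SimpleGraph V} {B : Finset V} :
    (H.induce (B : Set V)).Connected ↔
      B.Nonempty ∧ ∀ u ∈ B, ∀ w ∈ B, (within H B).Reachable u w := by
  constructor
  · intro h
    have hne : B.Nonempty := by
      obtain ⟨⟨x, hx⟩⟩ := h.nonempty
      exact ⟨x, by simpa using hx⟩
    refine ⟨hne, fun u hu w hw => ?_⟩
    have := h.preconnected ⟨u, by simpa using hu⟩ ⟨w, by simpa using hw⟩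
    exact SimpleGraph.Reachable.map
      (⟨Subtype.val, fun {a b} hab => ⟨by simpa using a.2, by simpa using b.2, hab⟩⟩ :
        H.induce (B : Set V) →g within H B) this
  · rintro ⟨⟨x, hx⟩, hr⟩
    rw [SimpleGraph.connected_iff]
    refine ⟨?_, ⟨⟨x, by simpa using hx⟩⟩⟩
    rintro ⟨u, hu⟩ ⟨w, hw⟩
    obtain ⟨p⟩ := hr u (by simpa using hu) w (by simpa using hw)
    exact within_reachable_of_walk p (by simpa using hu) (by simpa using hw)

/-- If two graphs agree inside `B`, the induced graphs on `B` coincide. -/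
lemma induce_eq_of_agree {H H' : SimpleGraph V} {B : Finset V}
    (h : ∀ u ∈ B, ∀ w ∈ B, (H.Adj u w ↔ H'.Adj u w)) :
    H.induce (B : Set V) = H'.induce (B : Set V) := by
  ext ⟨u, hu⟩ ⟨w, hw⟩
  exact h u (by simpa using hu) w (by simpa using hw)

lemma induce_connected_mono {H H' : SimpleGraph V} (hle : H ≤ H') {B : Finset V}
    (h : (H.induce (B : Set V)).Connected) : (H'.induce (B : Set V)).Connected := by
  refine h.mono ?_
  intro a b hab
  exact hle hab

section Walks

variable {G G1 : SimpleGraph V} {V1 V2 : Finset V} {B : Finset V} {v : V}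

lemma walk_stay {W : Finset V}
    (hcut : ∀ a b, a ∈ B → b ∈ B → G.Adj a b → (a ∈ W ↔ b ∈ W)) :
    ∀ {u w : V}, (within G B).Walk u w → u ∈ W → w ∈ W := by
  intro u w p
  induction p with
  | nil => exact id
  | @cons a b c h q ih =>
    intro ha
    exact ih ((hcut a b h.1 h.2.1 h.2.2).1 ha)

/-- A connected block lies entirely in `V1` or entirely in `V2`. -/
lemma block_in_side (hV : V1 ∪ V2 = Finset.univ)
    (hcut : ∀ a b, a ∈ B → b ∈ B → G.Adj a b → (a ∈ V1 ↔ b ∈ V1))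
    (hconn : (G.induce (B : Set V)).Connected) : B ⊆ V1 ∨ B ⊆ V2 := by
  obtain ⟨⟨xo, hx⟩, hreach⟩ := induce_connected_iff_within.1 hconn
  by_cases hx1 : xo ∈ V1
  · left
    intro w hw
    obtain ⟨p⟩ := hreach xo hx w hw
    exact walk_stay hcut p hx1
  · right
    intro w hw
    obtain ⟨p⟩ := hreach xo hx w hw
    have hw1 : w ∉ V1 := fun h => hx1 (walk_stay (W := V1) hcut p.reverse h)
    have := hV ▸ Finset.mem_univ w
    exact (Finset.mem_union.1 this).resolve_left hw1


lemma walk_project (hvV1 : v ∈ V1)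
    (hsplit : ∀ a b, G.Adj a b → (a ∈ V1 ∧ b ∈ V1) ∨ (a ∈ V2 ∧ b ∈ V2))
    (hsep : ∀ u, u ∈ V1 → u ∈ V2 → u = v)
    (h1 : ∀ a b, a ∈ V1 → b ∈ V1 → G.Adj a b → G1.Adj a b) :
    ∀ {a w : V}, (within G B).Walk a w → w ∈ V1 →
      (within G1 (B ∩ V1)).Reachable (if a ∈ V1 then a else v) w := by
  intro a w p
  induction p with
  | nil =>
    intro hw
    rw [if_pos hw]
  | @cons a b c h q ih =>
    intro hw
    obtain ⟨haB, hbB, hadj⟩ := h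
    by_cases ha1 : a ∈ V1
    · rw [if_pos ha1]
      by_cases hb1 : b ∈ V1
      · have : (within G1 (B ∩ V1)).Adj a b :=
          ⟨Finset.mem_inter.2 ⟨haB, ha1⟩, Finset.mem_inter.2 ⟨hbB, hb1⟩, h1 a b ha1 hb1 hadj⟩
        have hih := ih hw
        rw [if_pos hb1] at hih
        exact this.reachable.trans hih
      · have ha2 : a ∈ V2 := ((hsplit a b hadj).resolve_left (fun h => hb1 h.2)).1
        have hav : a = v := hsep a ha1 ha2
        have hih := ih hw
        rw [if_neg hb1] at hih
        exact hav ▸ hih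
    · rw [if_neg ha1]
      have hab2 := (hsplit a b hadj).resolve_left (fun h => ha1 h.1)
      by_cases hb1 : b ∈ V1
      · have hbv : b = v := hsep b hb1 hab2.2
        have hih := ih hw
        rw [if_pos hb1] at hih
        exact hbv ▸ hih
      · have hih := ih hw
        rwa [if_neg hb1] at hih

/-- Splitting a connected block containing `v` : the `V1`-part is `G1`-connected. -/
lemma split_block_connected (hvV1 : v ∈ V1) (hvB : v ∈ B)
    (hsplit : ∀ a b, G.Adj a b → (a ∈ V1 ∧ b ∈ V1) ∨ (a ∈ V2 ∧ b ∈ V2))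
    (hsep : ∀ u, u ∈ V1 → u ∈ V2 → u = v)
    (h1 : ∀ a b, a ∈ V1 → b ∈ V1 → G.Adj a b → G1.Adj a b)
    (hconn : (G.induce (B : Set V)).Connected) :
    (G1.induce ((B ∩ V1 : Finset V) : Set V)).Connected := by
  obtain ⟨hne, hreach⟩ := induce_connected_iff_within.1 hconn
  refine induce_connected_iff_within.2 ⟨⟨v, Finset.mem_inter.2 ⟨hvB, hvV1⟩⟩, ?_⟩
  intro u hu w hw
  obtain ⟨huB, hu1⟩ := Finset.mem_inter.1 hu
  obtain ⟨hwB, hw1⟩ := Finset.mem_inter.1 hw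
  obtain ⟨p⟩ := hreach u huB w hwB
  have := walk_project (V2 := V2) hvV1 hsplit hsep h1 p hw1
  rwa [if_pos hu1] at this

end Walks

lemma merge_block_connected {G G1 G2 : SimpleGraph V} {B1 B2 : Finset V} {v : V}
    (hle1 : G1 ≤ G) (hle2 : G2 ≤ G) (hv1 : v ∈ B1) (hv2 : v ∈ B2)
    (h1 : (G1.induce (B1 : Set V)).Connected) (h2 : (G2.induce (B2 : Set V)).Connected) :
    (G.induce ((B1 ∪ B2 : Finset V) : Set V)).Connected := by
  have c1 := induce_connected_mono hle1 h1
  have c2 := induce_connected_mono hle2 h2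
  have := SimpleGraph.induce_union_connected c1.preconnected c2.preconnected
    ⟨v, Set.mem_inter (by simpa using hv1) (by simpa using hv2)⟩
  rwa [← Finset.coe_union] at this

lemma connParts_eq_cp_univ (G : SimpleGraph V) : connParts G = cp G Finset.univ := by
  ext P
  rw [mem_connParts, mem_cp]
  constructor
  · rintro ⟨⟨hne, hu⟩, hc⟩
    exact ⟨fun B _ => Finset.subset_univ B, hne, fun w _ => hu w, hc⟩
  · rintro ⟨_, hne, hu, hc⟩
    exact ⟨⟨hne, fun w => hu w (Finset.mem_univ w)⟩, hc⟩

lemma Q_eq_sum_cp_univ (G : SimpleGraph V) (x : ℤ) :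
    Q G x = ∑ P ∈ cp G Finset.univ, x ^ P.card := by
  rw [Q, connParts_eq_cp_univ]

section Case1

variable {G G1 G2 : SimpleGraph V} {V1 V2 : Finset V}

lemma cp_prod_disjoint
    (hV : V1 ∪ V2 = Finset.univ) (hdisj : V1 ∩ V2 = ∅)
    (hsplit : ∀ a b : V, G.Adj a b → (a ∈ V1 ∧ b ∈ V1) ∨ (a ∈ V2 ∧ b ∈ V2))
    (hagree1 : ∀ a ∈ V1, ∀ b ∈ V1, (G.Adj a b ↔ G1.Adj a b))
    (hagree2 : ∀ a ∈ V2, ∀ b ∈ V2, (G.Adj a b ↔ G2.Adj a b)) (x : ℤ) :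
    ∑ P ∈ cp G Finset.univ, x ^ P.card =
      (∑ P1 ∈ cp G1 V1, x ^ P1.card) * (∑ P2 ∈ cp G2 V2, x ^ P2.card) := by
  classical
  have hdisj' : ∀ u : V, u ∈ V1 → u ∈ V2 → False := fun u h1 h2 => by
    have : u ∈ V1 ∩ V2 := Finset.mem_inter.2 ⟨h1, h2⟩
    simp [hdisj] at this
  have hcut : ∀ a b : V, G.Adj a b → (a ∈ V1 ↔ b ∈ V1) := by
    intro a b hab
    rcases hsplit a b hab with ⟨h1, h2⟩ | ⟨h1, h2⟩
    · simp [h1, h2]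
    · constructor
      · intro h; exact absurd (hdisj' a h h1) not_false
      · intro h; exact absurd (hdisj' b h h2) not_false
  -- every connected block is in one side
  have hside : ∀ P ∈ cp G Finset.univ, ∀ B ∈ P, B ⊆ V1 ∨ B ⊆ V2 := by
    intro P hP B hB
    obtain ⟨_, _, _, hconn⟩ := mem_cp.1 hP
    exact block_in_side hV (fun a b _ _ hab => hcut a b hab) (hconn B hB)
  have heq1 : ∀ B : Finset V, B ⊆ V1 →
      G.induce (B : Set V) = G1.induce (B : Set V) := by
    intro B hB
    exact induce_eq_of_agree (fun u hu w hw => hagree1 u (hB hu) w (hB hw))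
  have heq2 : ∀ B : Finset V, B ⊆ V2 →
      G.induce (B : Set V) = G2.induce (B : Set V) := by
    intro B hB
    exact induce_eq_of_agree (fun u hu w hw => hagree2 u (hB hu) w (hB hw))
  rw [Finset.sum_mul_sum, ← Finset.sum_product']
  refine Finset.sum_nbij'
    (i := fun P => (P.filter (· ⊆ V1), P.filter (· ⊆ V2)))
    (j := fun pq => pq.1 ∪ pq.2) ?_ ?_ ?_ ?_ ?_
  · -- i maps into the product
    intro P hP
    obtain ⟨-, hne, huniq, hconn⟩ := mem_cp.1 hP
    rw [Finset.mem_product]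
    constructor
    · refine mem_cp.2 ⟨fun B hB => (Finset.mem_filter.1 hB).2, ?_, ?_, ?_⟩
      · intro h; exact hne (Finset.mem_filter.1 h).1
      · intro u hu
        obtain ⟨B, ⟨hBP, huB⟩, hB⟩ := huniq u (Finset.mem_univ u)
        have hBV1 : B ⊆ V1 := by
          rcases hside P hP B hBP with h | h
          · exact h
          · exact absurd (hdisj' u hu (h huB)) not_false
        exact ⟨B, ⟨Finset.mem_filter.2 ⟨hBP, hBV1⟩, huB⟩,
          fun C ⟨hC, huC⟩ => hB C ⟨(Finset.mem_filter.1 hC).1, huC⟩⟩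
      · intro B hB
        obtain ⟨hBP, hBV1⟩ := Finset.mem_filter.1 hB
        rw [← heq1 B hBV1]
        exact hconn B hBP
    · refine mem_cp.2 ⟨fun B hB => (Finset.mem_filter.1 hB).2, ?_, ?_, ?_⟩
      · intro h; exact hne (Finset.mem_filter.1 h).1
      · intro u hu
        obtain ⟨B, ⟨hBP, huB⟩, hB⟩ := huniq u (Finset.mem_univ u)
        have hBV2 : B ⊆ V2 := by
          rcases hside P hP B hBP with h | h
          · exact absurd (hdisj' u (h huB) hu) not_false
          · exact h
        exact ⟨B, ⟨Finset.mem_filter.2 ⟨hBP, hBV2⟩, huB⟩,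
          fun C ⟨hC, huC⟩ => hB C ⟨(Finset.mem_filter.1 hC).1, huC⟩⟩
      · intro B hB
        obtain ⟨hBP, hBV2⟩ := Finset.mem_filter.1 hB
        rw [← heq2 B hBV2]
        exact hconn B hBP
  · -- j maps back
    rintro ⟨P1, P2⟩ hpq
    rw [Finset.mem_product] at hpq
    obtain ⟨hsub1, hne1, huniq1, hconn1⟩ := mem_cp.1 hpq.1
    obtain ⟨hsub2, hne2, huniq2, hconn2⟩ := mem_cp.1 hpq.2
    refine mem_cp.2 ⟨fun B _ => Finset.subset_univ B, ?_, ?_, ?_⟩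
    · intro h
      rcases Finset.mem_union.1 h with h | h
      · exact hne1 h
      · exact hne2 h
    · intro u _
      have hu12 := hV ▸ Finset.mem_univ u
      rcases Finset.mem_union.1 hu12 with hu | hu
      · obtain ⟨B, ⟨hBP, huB⟩, hB⟩ := huniq1 u hu
        refine ⟨B, ⟨Finset.mem_union_left _ hBP, huB⟩, ?_⟩
        rintro C ⟨hC, huC⟩
        rcases Finset.mem_union.1 hC with hC | hC
        · exact hB C ⟨hC, huC⟩
        · exact absurd (hdisj' u hu (hsub2 C hC huC)) not_false
      · obtain ⟨B, ⟨hBP, huB⟩, hB⟩ := huniq2 u hu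
        refine ⟨B, ⟨Finset.mem_union_right _ hBP, huB⟩, ?_⟩
        rintro C ⟨hC, huC⟩
        rcases Finset.mem_union.1 hC with hC | hC
        · exact absurd (hdisj' u (hsub1 C hC huC) hu) not_false
        · exact hB C ⟨hC, huC⟩
    · intro B hB
      rcases Finset.mem_union.1 hB with hB | hB
      · rw [heq1 B (hsub1 B hB)]; exact hconn1 B hB
      · rw [heq2 B (hsub2 B hB)]; exact hconn2 B hB
  · -- left inverse
    intro P hP
    show P.filter (· ⊆ V1) ∪ P.filter (· ⊆ V2) = P
    ext B
    simp only [Finset.mem_union, Finset.mem_filter]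
    constructor
    · rintro (⟨h, -⟩ | ⟨h, -⟩) <;> exact h
    · intro hB
      rcases hside P hP B hB with h | h
      · exact Or.inl ⟨hB, h⟩
      · exact Or.inr ⟨hB, h⟩
  · -- right inverse
    rintro ⟨P1, P2⟩ hpq
    rw [Finset.mem_product] at hpq
    obtain ⟨hsub1, hne1, -, -⟩ := mem_cp.1 hpq.1
    obtain ⟨hsub2, hne2, -, -⟩ := mem_cp.1 hpq.2
    have h12 : ∀ B ∈ P1, B ∈ P2 → False := by
      intro B hB1 hB2
      have hBe : B = ∅ := by
        rw [Finset.eq_empty_iff_forall_notMem]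
        intro u hu
        exact hdisj' u (hsub1 B hB1 hu) (hsub2 B hB2 hu)
      exact hne1 (hBe ▸ hB1)
    have e1 : (P1 ∪ P2).filter (· ⊆ V1) = P1 := by
      ext B
      simp only [Finset.mem_filter, Finset.mem_union]
      constructor
      · rintro ⟨hB | hB, hBV⟩
        · exact hB
        · exfalso
          have hBe : B = ∅ := by
            rw [Finset.eq_empty_iff_forall_notMem]
            intro u hu
            exact hdisj' u (hBV hu) (hsub2 B hB hu)
          exact hne2 (hBe ▸ hB)
      · intro hB
        exact ⟨Or.inl hB, hsub1 B hB⟩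
    have e2 : (P1 ∪ P2).filter (· ⊆ V2) = P2 := by
      ext B
      simp only [Finset.mem_filter, Finset.mem_union]
      constructor
      · rintro ⟨hB | hB, hBV⟩
        · exfalso
          have hBe : B = ∅ := by
            rw [Finset.eq_empty_iff_forall_notMem]
            intro u hu
            exact hdisj' u (hsub1 B hB hu) (hBV hu)
          exact hne1 (hBe ▸ hB)
        · exact hB
      · intro hB
        exact ⟨Or.inr hB, hsub2 B hB⟩
    show ((P1 ∪ P2).filter (· ⊆ V1), (P1 ∪ P2).filter (· ⊆ V2)) = (P1, P2)
    rw [e1, e2]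
  · -- cardinalities
    intro P hP
    obtain ⟨-, hne, -, -⟩ := mem_cp.1 hP
    have hdisjf : Disjoint (P.filter (· ⊆ V1)) (P.filter (· ⊆ V2)) := by
      rw [Finset.disjoint_left]
      intro B hB1 hB2
      have h1 := (Finset.mem_filter.1 hB1).2
      have h2 := (Finset.mem_filter.1 hB2).2
      have hBe : B = ∅ := by
        rw [Finset.eq_empty_iff_forall_notMem]
        intro u hu
        exact hdisj' u (h1 hu) (h2 hu)
      exact hne (hBe ▸ (Finset.mem_filter.1 hB1).1)
    have hunion : P.filter (· ⊆ V1) ∪ P.filter (· ⊆ V2) = P := by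
      ext B
      simp only [Finset.mem_union, Finset.mem_filter]
      constructor
      · rintro (⟨h, -⟩ | ⟨h, -⟩) <;> exact h
      · intro hB
        rcases hside P hP B hB with h | h
        · exact Or.inl ⟨hB, h⟩
        · exact Or.inr ⟨hB, h⟩
    have : (P.filter (· ⊆ V1)).card + (P.filter (· ⊆ V2)).card = P.card := by
      rw [← Finset.card_union_of_disjoint hdisjf, hunion]
    rw [← this, pow_add]

end Case1

section Case2

variable {G H : SimpleGraph V} {W W' : Finset V} {v : V}

lemma side_of_block (hV : W ∪ W' = Finset.univ)
    (hsplit : ∀ a b : V, G.Adj a b → (a ∈ W ∧ b ∈ W) ∨ (a ∈ W' ∧ b ∈ W'))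
    (hsep : ∀ u : V, u ∈ W → u ∈ W' → u = v)
    {B : Finset V} (hconn : (G.induce (B : Set V)).Connected) (hvB : v ∉ B) :
    B ⊆ W ∨ B ⊆ W' := by
  refine block_in_side hV ?_ hconn
  intro a b haB hbB hab
  rcases hsplit a b hab with ⟨h1, h2⟩ | ⟨h1, h2⟩
  · exact iff_of_true h1 h2
  · constructor
    · intro h; exact absurd (hsep a h h1 ▸ haB) hvB
    · intro h; exact absurd (hsep b h h2 ▸ hbB) hvB

/-- The `W`-side image of a connected partition of `G` is a connected partition of `H` on `W`. -/
lemma image_side_mem_cp (hV : W ∪ W' = Finset.univ) (hvW : v ∈ W)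
    (hsplit : ∀ a b : V, G.Adj a b → (a ∈ W ∧ b ∈ W) ∨ (a ∈ W' ∧ b ∈ W'))
    (hsep : ∀ u : V, u ∈ W → u ∈ W' → u = v)
    (hagree : ∀ a ∈ W, ∀ b ∈ W, (G.Adj a b ↔ H.Adj a b))
    {P : Finset (Finset V)} (hP : P ∈ cp G Finset.univ) :
    (P.filter (fun B => (B ∩ W).Nonempty)).image (· ∩ W) ∈ cp H W := by
  classical
  obtain ⟨-, hne, huniq, hconn⟩ := mem_cp.1 hP
  refine mem_cp.2 ⟨?_, ?_, ?_, ?_⟩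
  · intro C hC
    obtain ⟨B, -, rfl⟩ := Finset.mem_image.1 hC
    exact Finset.inter_subset_right
  · intro h
    obtain ⟨B, hB, hBe⟩ := Finset.mem_image.1 h
    have := (Finset.mem_filter.1 hB).2
    rw [hBe] at this
    exact this.ne_empty rfl
  · intro u hu
    obtain ⟨B, ⟨hBP, huB⟩, hB⟩ := huniq u (Finset.mem_univ u)
    have huBW : u ∈ B ∩ W := Finset.mem_inter.2 ⟨huB, hu⟩
    refine ⟨B ∩ W, ⟨Finset.mem_image_of_mem _ (Finset.mem_filter.2 ⟨hBP, ⟨u, huBW⟩⟩), huBW⟩, ?_⟩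
    rintro C ⟨hC, huC⟩
    obtain ⟨B', hB', rfl⟩ := Finset.mem_image.1 hC
    have hB'P := (Finset.mem_filter.1 hB').1
    have : B' = B := hB B' ⟨hB'P, (Finset.mem_inter.1 huC).1⟩
    rw [this]
  · intro C hC
    obtain ⟨B, hB, rfl⟩ := Finset.mem_image.1 hC
    obtain ⟨hBP, hBW⟩ := Finset.mem_filter.1 hB
    by_cases hvB : v ∈ B
    · exact split_block_connected hvW hvB hsplit hsep
        (fun a b ha hb hab => (hagree a ha b hb).1 hab) (hconn B hBP)
    · rcases side_of_block hV hsplit hsep (hconn B hBP) hvB with h | h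
      · rw [Finset.inter_eq_left.2 h]
        rw [← induce_eq_of_agree (fun a ha b hb => hagree a (h ha) b (h hb))]
        exact hconn B hBP
      · exfalso
        obtain ⟨u, hu⟩ := hBW
        obtain ⟨huB, huW⟩ := Finset.mem_inter.1 hu
        exact hvB (hsep u huW (h huB) ▸ huB)

/-- Blocks of the side image not containing `v` are exactly the `W`-side blocks. -/
lemma image_side_filter_not_v (hV : W ∪ W' = Finset.univ) (hvW : v ∈ W)
    (hsplit : ∀ a b : V, G.Adj a b → (a ∈ W ∧ b ∈ W) ∨ (a ∈ W' ∧ b ∈ W'))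
    (hsep : ∀ u : V, u ∈ W → u ∈ W' → u = v)
    {P : Finset (Finset V)} (hP : P ∈ cp G Finset.univ) :
    ((P.filter (fun B => (B ∩ W).Nonempty)).image (· ∩ W)).filter (fun C => v ∉ C) =
      P.filter (fun B => v ∉ B ∧ B ⊆ W) := by
  classical
  obtain ⟨-, hne, huniq, hconn⟩ := mem_cp.1 hP
  ext C
  simp only [Finset.mem_filter, Finset.mem_image]
  constructor
  · rintro ⟨⟨B, ⟨hBP, hBW⟩, rfl⟩, hvC⟩
    have hvB : v ∉ B := fun h => hvC (Finset.mem_inter.2 ⟨h, hvW⟩)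
    rcases side_of_block hV hsplit hsep (hconn B hBP) hvB with h | h
    · rw [Finset.inter_eq_left.2 h]
      exact ⟨hBP, hvB, h⟩
    · exfalso
      obtain ⟨u, hu⟩ := hBW
      obtain ⟨huB, huW⟩ := Finset.mem_inter.1 hu
      exact hvB (hsep u huW (h huB) ▸ huB)
  · rintro ⟨hCP, hvC, hCW⟩
    have hCne : C.Nonempty := Finset.nonempty_iff_ne_empty.2 (fun h => hne (h ▸ hCP))
    have hCeq : C ∩ W = C := Finset.inter_eq_left.2 hCW
    refine ⟨⟨C, ⟨hCP, by rw [hCeq]; exact hCne⟩, hCeq⟩, fun h => hvC h⟩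

/-- The block of the side image containing `v`. -/
lemma image_side_filter_v (hvW : v ∈ W)
    {P : Finset (Finset V)} (hP : P ∈ cp G Finset.univ)
    {Bv : Finset V} (hBvP : Bv ∈ P) (hvBv : v ∈ Bv) :
    ((P.filter (fun B => (B ∩ W).Nonempty)).image (· ∩ W)).filter (fun C => v ∈ C) =
      {Bv ∩ W} := by
  classical
  obtain ⟨-, hne, huniq, hconn⟩ := mem_cp.1 hP
  obtain ⟨B', -, hB'⟩ := huniq v (Finset.mem_univ v)
  have hBu : ∀ C ∈ P, v ∈ C → C = Bv := fun C hC hvC =>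
    (hB' C ⟨hC, hvC⟩).trans (hB' Bv ⟨hBvP, hvBv⟩).symm
  ext C
  simp only [Finset.mem_filter, Finset.mem_image, Finset.mem_singleton]
  constructor
  · rintro ⟨⟨B, ⟨hBP, -⟩, rfl⟩, hvC⟩
    rw [hBu B hBP (Finset.mem_inter.1 hvC).1]
  · rintro rfl
    have hv : v ∈ Bv ∩ W := Finset.mem_inter.2 ⟨hvBv, hvW⟩
    exact ⟨⟨Bv, ⟨hBvP, ⟨v, hv⟩⟩, rfl⟩, hv⟩


lemma vblock_filter_eq {P : Finset (Finset V)} {BV : Finset V}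
    (hB : BV ∈ P) (hv : v ∈ BV) (hu : ∀ C ∈ P, v ∈ C → C = BV) :
    P.filter (fun C => v ∈ C) = {BV} := by
  ext C
  simp only [Finset.mem_filter, Finset.mem_singleton]
  exact ⟨fun ⟨h1, h2⟩ => hu C h1 h2, fun h => h ▸ ⟨hB, hv⟩⟩

lemma image_side_of_merge {P1 P2 : Finset (Finset V)} {B1 B2 : Finset V}
    (hsep : ∀ u : V, u ∈ W → u ∈ W' → u = v)
    (hsub1 : ∀ B ∈ P1, B ⊆ W) (hne1 : ∅ ∉ P1)
    (hu1 : ∀ C ∈ P1, v ∈ C → C = B1) (hB1 : B1 ∈ P1) (hvB1 : v ∈ B1)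
    (hsub2 : ∀ B ∈ P2, B ⊆ W') (hB2W : B2 ⊆ W') (hvB2 : v ∈ B2) :
    (((P1.filter (fun C => v ∉ C) ∪ P2.filter (fun C => v ∉ C)) ∪ {B1 ∪ B2}).filter
      (fun C => (C ∩ W).Nonempty)).image (· ∩ W) = P1 := by
  classical
  have hMW : (B1 ∪ B2) ∩ W = B1 := by
    ext u
    simp only [Finset.mem_inter, Finset.mem_union]
    constructor
    · rintro ⟨h1 | h2, huW⟩
      · exact h1
      · exact hsep u huW (hB2W h2) ▸ hvB1
    · intro h
      exact ⟨Or.inl h, hsub1 B1 hB1 h⟩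
  ext C
  simp only [Finset.mem_image, Finset.mem_filter, Finset.mem_union, Finset.mem_singleton]
  constructor
  · rintro ⟨D, ⟨(⟨hD, hvD⟩ | ⟨hD, hvD⟩) | hDM, hDne⟩, rfl⟩
    · rwa [Finset.inter_eq_left.2 (hsub1 D hD)]
    · exfalso
      obtain ⟨u, hu⟩ := hDne
      obtain ⟨huD, huW⟩ := Finset.mem_inter.1 hu
      exact hvD (hsep u huW (hsub2 D hD huD) ▸ huD)
    · subst hDM
      rw [hMW]
      exact hB1
  · intro hCP
    by_cases hvC : v ∈ C
    · have hCB : C = B1 := hu1 C hCP hvC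
      exact ⟨B1 ∪ B2, ⟨Or.inr rfl, by rw [hMW]; exact ⟨v, hvB1⟩⟩, hMW.trans hCB.symm⟩
    · have hCne : C.Nonempty := Finset.nonempty_iff_ne_empty.2 (fun h => hne1 (h ▸ hCP))
      have hCeq : C ∩ W = C := Finset.inter_eq_left.2 (hsub1 C hCP)
      exact ⟨C, ⟨Or.inl (Or.inl ⟨hCP, hvC⟩), by rw [hCeq]; exact hCne⟩, hCeq⟩

end Case2

lemma cp_prod_artic {G G1 G2 : SimpleGraph V} {V1 V2 : Finset V} {v : V}
    (hV : V1 ∪ V2 = Finset.univ) (hv1 : v ∈ V1) (hv2 : v ∈ V2)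
    (hsep : ∀ u : V, u ∈ V1 → u ∈ V2 → u = v)
    (hsplit : ∀ a b : V, G.Adj a b → (a ∈ V1 ∧ b ∈ V1) ∨ (a ∈ V2 ∧ b ∈ V2))
    (hagree1 : ∀ a ∈ V1, ∀ b ∈ V1, (G.Adj a b ↔ G1.Adj a b))
    (hagree2 : ∀ a ∈ V2, ∀ b ∈ V2, (G.Adj a b ↔ G2.Adj a b))
    (hle1 : G1 ≤ G) (hle2 : G2 ≤ G) (x : ℤ) :
    ∑ P ∈ cp G Finset.univ, x ^ (P.card + 1) =
      (∑ P1 ∈ cp G1 V1, x ^ P1.card) * (∑ P2 ∈ cp G2 V2, x ^ P2.card) := by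
  classical
  have hV2 : V2 ∪ V1 = Finset.univ := by rwa [Finset.union_comm]
  have hsplit2 : ∀ a b : V, G.Adj a b → (a ∈ V2 ∧ b ∈ V2) ∨ (a ∈ V1 ∧ b ∈ V1) :=
    fun a b h => (hsplit a b h).symm
  have hsep2 : ∀ u : V, u ∈ V2 → u ∈ V1 → u = v := fun u h2 h1 => hsep u h1 h2
  rw [Finset.sum_mul_sum, ← Finset.sum_product']
  refine Finset.sum_nbij'
    (i := fun P => ((P.filter (fun B => (B ∩ V1).Nonempty)).image (· ∩ V1),
                    (P.filter (fun B => (B ∩ V2).Nonempty)).image (· ∩ V2)))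
    (j := fun pq => (pq.1.filter (fun C => v ∉ C) ∪ pq.2.filter (fun C => v ∉ C)) ∪
      {(pq.1.filter (fun C => v ∈ C)).sup id ∪ (pq.2.filter (fun C => v ∈ C)).sup id})
    ?_ ?_ ?_ ?_ ?_
  · intro P hP
    exact Finset.mem_product.2
      ⟨image_side_mem_cp hV hv1 hsplit hsep hagree1 hP,
       image_side_mem_cp hV2 hv2 hsplit2 hsep2 hagree2 hP⟩
  · -- j maps back into cp G univ
    rintro ⟨P1, P2⟩ hpq
    rw [Finset.mem_product] at hpq
    obtain ⟨hsub1, hne1, huniq1, hconn1⟩ := mem_cp.1 hpq.1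
    obtain ⟨hsub2, hne2, huniq2, hconn2⟩ := mem_cp.1 hpq.2
    obtain ⟨B1, ⟨hB1P, hvB1⟩, hu1'⟩ := huniq1 v hv1
    obtain ⟨B2, ⟨hB2P, hvB2⟩, hu2'⟩ := huniq2 v hv2
    have hu1 : ∀ C ∈ P1, v ∈ C → C = B1 := fun C hC hvC => hu1' C ⟨hC, hvC⟩
    have hu2 : ∀ C ∈ P2, v ∈ C → C = B2 := fun C hC hvC => hu2' C ⟨hC, hvC⟩
    show (P1.filter (fun C => v ∉ C) ∪ P2.filter (fun C => v ∉ C)) ∪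
      {(P1.filter (fun C => v ∈ C)).sup id ∪ (P2.filter (fun C => v ∈ C)).sup id} ∈
        cp G Finset.univ
    rw [vblock_filter_eq hB1P hvB1 hu1, vblock_filter_eq hB2P hvB2 hu2,
      Finset.sup_singleton, Finset.sup_singleton, id_eq, id_eq]
    set M := B1 ∪ B2 with hM
    have hmem : ∀ C : Finset V,
        C ∈ (P1.filter (fun C => v ∉ C) ∪ P2.filter (fun C => v ∉ C)) ∪ {M} ↔
          (C ∈ P1 ∧ v ∉ C) ∨ (C ∈ P2 ∧ v ∉ C) ∨ C = M := by
      intro C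
      simp only [Finset.mem_union, Finset.mem_filter, Finset.mem_singleton]
      tauto
    refine mem_cp.2 ⟨fun B _ => Finset.subset_univ B, ?_, ?_, ?_⟩
    · intro h
      rcases (hmem ∅).1 h with ⟨h1, -⟩ | ⟨h1, -⟩ | hMe
      · exact hne1 h1
      · exact hne2 h1
      · have : v ∈ M := Finset.mem_union_left _ hvB1
        rw [← hMe] at this
        simp at this
    · intro u hu
      have same1 : ∀ C ∈ P1, ∀ C' ∈ P1, u ∈ C → u ∈ C' → C = C' := by
        intro C hC C' hC' huC huC'
        obtain ⟨D, -, hD⟩ := huniq1 u (hsub1 C hC huC)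
        rw [hD C ⟨hC, huC⟩, hD C' ⟨hC', huC'⟩]
      have same2 : ∀ C ∈ P2, ∀ C' ∈ P2, u ∈ C → u ∈ C' → C = C' := by
        intro C hC C' hC' huC huC'
        obtain ⟨D, -, hD⟩ := huniq2 u (hsub2 C hC huC)
        rw [hD C ⟨hC, huC⟩, hD C' ⟨hC', huC'⟩]
      have cross : ∀ C ∈ P1, ∀ C' ∈ P2, u ∈ C → u ∈ C' → u = v :=
        fun C hC C' hC' huC huC' => hsep u (hsub1 C hC huC) (hsub2 C' hC' huC')
      have hMc1 : ∀ D ∈ P1, v ∉ D → u ∈ D → u ∈ M → False := by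
        intro D hD hvD huD huM
        rcases Finset.mem_union.1 huM with h | h
        · exact hvD (same1 D hD B1 hB1P huD h ▸ hvB1)
        · exact hvD (cross D hD B2 hB2P huD h ▸ huD)
      have hMc2 : ∀ D ∈ P2, v ∉ D → u ∈ D → u ∈ M → False := by
        intro D hD hvD huD huM
        rcases Finset.mem_union.1 huM with h | h
        · exact hvD (cross B1 hB1P D hD h huD ▸ huD)
        · exact hvD (same2 D hD B2 hB2P huD h ▸ hvB2)
      have key : ∀ C, ((C ∈ P1 ∧ v ∉ C) ∨ (C ∈ P2 ∧ v ∉ C) ∨ C = M) → u ∈ C →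
          ∀ C', ((C' ∈ P1 ∧ v ∉ C') ∨ (C' ∈ P2 ∧ v ∉ C') ∨ C' = M) → u ∈ C' → C = C' := by
        rintro C (⟨h1, h2⟩ | ⟨h1, h2⟩ | h1) huC C' (⟨h1', h2'⟩ | ⟨h1', h2'⟩ | h1') huC'
        · exact same1 C h1 C' h1' huC huC'
        · exact absurd (cross C h1 C' h1' huC huC' ▸ huC) h2
        · exact (hMc1 C h1 h2 huC (h1' ▸ huC')).elim
        · exact absurd (cross C' h1' C h1 huC' huC ▸ huC) h2
        · exact same2 C h1 C' h1' huC huC'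
        · exact (hMc2 C h1 h2 huC (h1' ▸ huC')).elim
        · exact ((hMc1 C' h1' h2' huC' (h1 ▸ huC)).elim)
        · exact ((hMc2 C' h1' h2' huC' (h1 ▸ huC)).elim)
        · exact h1.trans h1'.symm
      by_cases huM : u ∈ M
      · exact ⟨M, ⟨(hmem M).2 (Or.inr (Or.inr rfl)), huM⟩,
          fun C' ⟨hm, hu'⟩ => key C' ((hmem C').1 hm) hu' M (Or.inr (Or.inr rfl)) huM⟩
      · rcases Finset.mem_union.1 (hV ▸ Finset.mem_univ u) with huV | huV
        · obtain ⟨B, ⟨hBP, huB⟩, -⟩ := huniq1 u huV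
          have hvB : v ∉ B := fun h =>
            huM (Finset.mem_union_left _ (hu1 B hBP h ▸ huB))
          exact ⟨B, ⟨(hmem B).2 (Or.inl ⟨hBP, hvB⟩), huB⟩,
            fun C' ⟨hm, hu'⟩ => key C' ((hmem C').1 hm) hu' B (Or.inl ⟨hBP, hvB⟩) huB⟩
        · obtain ⟨B, ⟨hBP, huB⟩, -⟩ := huniq2 u huV
          have hvB : v ∉ B := fun h =>
            huM (Finset.mem_union_right _ (hu2 B hBP h ▸ huB))
          exact ⟨B, ⟨(hmem B).2 (Or.inr (Or.inl ⟨hBP, hvB⟩)), huB⟩,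
            fun C' ⟨hm, hu'⟩ => key C' ((hmem C').1 hm) hu' B (Or.inr (Or.inl ⟨hBP, hvB⟩)) huB⟩
    · intro B hB
      rcases (hmem B).1 hB with ⟨h1, -⟩ | ⟨h1, -⟩ | h1
      · have hBW := hsub1 B h1
        rw [induce_eq_of_agree (fun a ha b hb => hagree1 a (hBW ha) b (hBW hb))]
        exact hconn1 B h1
      · have hBW := hsub2 B h1
        rw [induce_eq_of_agree (fun a ha b hb => hagree2 a (hBW ha) b (hBW hb))]
        exact hconn2 B h1
      · rw [h1]
        exact merge_block_connected hle1 hle2 hvB1 hvB2 (hconn1 B1 hB1P) (hconn2 B2 hB2P)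
  · -- left inverse
    intro P hP
    obtain ⟨-, hne, huniq, hconn⟩ := mem_cp.1 hP
    obtain ⟨Bv, ⟨hBvP, hvBv⟩, hbu'⟩ := huniq v (Finset.mem_univ v)
    have hbu : ∀ C ∈ P, v ∈ C → C = Bv := fun C hC h => hbu' C ⟨hC, h⟩
    beta_reduce
    rw [image_side_filter_v hv1 hP hBvP hvBv, image_side_filter_v hv2 hP hBvP hvBv,
      Finset.sup_singleton, Finset.sup_singleton, id_eq, id_eq,
      image_side_filter_not_v hV hv1 hsplit hsep hP,
      image_side_filter_not_v hV2 hv2 hsplit2 hsep2 hP]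
    have hM : (Bv ∩ V1) ∪ (Bv ∩ V2) = Bv := by
      rw [← Finset.inter_union_distrib_left, hV, Finset.inter_univ]
    rw [hM]
    ext B
    simp only [Finset.mem_union, Finset.mem_filter, Finset.mem_singleton]
    constructor
    · rintro ((⟨h, -⟩ | ⟨h, -⟩) | h)
      · exact h
      · exact h
      · exact h ▸ hBvP
    · intro hBP
      by_cases hvB : v ∈ B
      · exact Or.inr (hbu B hBP hvB)
      · rcases side_of_block hV hsplit hsep (hconn B hBP) hvB with h | h
        · exact Or.inl (Or.inl ⟨hBP, hvB, h⟩)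
        · exact Or.inl (Or.inr ⟨hBP, hvB, h⟩)
  · -- right inverse
    rintro ⟨P1, P2⟩ hpq
    rw [Finset.mem_product] at hpq
    obtain ⟨hsub1, hne1, huniq1, hconn1⟩ := mem_cp.1 hpq.1
    obtain ⟨hsub2, hne2, huniq2, hconn2⟩ := mem_cp.1 hpq.2
    obtain ⟨B1, ⟨hB1P, hvB1⟩, hu1'⟩ := huniq1 v hv1
    obtain ⟨B2, ⟨hB2P, hvB2⟩, hu2'⟩ := huniq2 v hv2
    have hu1 : ∀ C ∈ P1, v ∈ C → C = B1 := fun C hC hvC => hu1' C ⟨hC, hvC⟩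
    have hu2 : ∀ C ∈ P2, v ∈ C → C = B2 := fun C hC hvC => hu2' C ⟨hC, hvC⟩
    have e0 : (P1.filter (fun C => v ∉ C) ∪ P2.filter (fun C => v ∉ C)) ∪
        {(P1.filter (fun C => v ∈ C)).sup id ∪ (P2.filter (fun C => v ∈ C)).sup id} =
        (P1.filter (fun C => v ∉ C) ∪ P2.filter (fun C => v ∉ C)) ∪ {B1 ∪ B2} := by
      rw [vblock_filter_eq hB1P hvB1 hu1, vblock_filter_eq hB2P hvB2 hu2,
        Finset.sup_singleton, Finset.sup_singleton, id_eq, id_eq]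
    have e1 := image_side_of_merge (W := V1) (W' := V2) hsep hsub1 hne1 hu1 hB1P hvB1
      hsub2 (hsub2 B2 hB2P) hvB2
    have e2' := image_side_of_merge (W := V2) (W' := V1) hsep2 hsub2 hne2 hu2 hB2P hvB2
      hsub1 (hsub1 B1 hB1P) hvB1
    have hcomm : (P2.filter (fun C => v ∉ C) ∪ P1.filter (fun C => v ∉ C)) ∪ {B2 ∪ B1} =
        (P1.filter (fun C => v ∉ C) ∪ P2.filter (fun C => v ∉ C)) ∪ {B1 ∪ B2} := by
      rw [Finset.union_comm (P2.filter _) (P1.filter _), Finset.union_comm B2 B1]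
    rw [hcomm] at e2'
    beta_reduce
    rw [e0, Prod.mk.injEq]
    exact ⟨e1, e2'⟩
  · -- cardinality
    intro P hP
    obtain ⟨-, hne, huniq, hconn⟩ := mem_cp.1 hP
    obtain ⟨Bv, ⟨hBvP, hvBv⟩, hbu'⟩ := huniq v (Finset.mem_univ v)
    have hbu : ∀ C ∈ P, v ∈ C → C = Bv := fun C hC h => hbu' C ⟨hC, h⟩
    have hinjW : ∀ W : Finset V,
        Set.InjOn (· ∩ W) (P.filter (fun B => (B ∩ W).Nonempty) : Finset (Finset V)) := by
      intro W B hB B' hB' hEq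
      simp only [Finset.coe_filter, Set.mem_setOf_eq] at hB hB'
      obtain ⟨u, hu⟩ := hB.2
      have hu' : u ∈ B' ∩ W := by
        have : B ∩ W = B' ∩ W := hEq
        rwa [this] at hu
      obtain ⟨D, -, hD⟩ := huniq u (Finset.mem_univ u)
      exact (hD B ⟨hB.1, (Finset.mem_inter.1 hu).1⟩).trans
        (hD B' ⟨hB'.1, (Finset.mem_inter.1 hu').1⟩).symm
    have hcard1 := Finset.card_image_of_injOn (hinjW V1)
    have hcard2 := Finset.card_image_of_injOn (hinjW V2)
    have hun : P.filter (fun B => (B ∩ V1).Nonempty) ∪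
        P.filter (fun B => (B ∩ V2).Nonempty) = P := by
      rw [← Finset.filter_or]
      refine Finset.filter_true_of_mem ?_
      intro B hB
      obtain ⟨u, hu⟩ := Finset.nonempty_iff_ne_empty.2 (fun h => hne (h ▸ hB))
      rcases Finset.mem_union.1 (hV ▸ Finset.mem_univ u) with h | h
      · exact Or.inl ⟨u, Finset.mem_inter.2 ⟨hu, h⟩⟩
      · exact Or.inr ⟨u, Finset.mem_inter.2 ⟨hu, h⟩⟩
    have hint : P.filter (fun B => (B ∩ V1).Nonempty) ∩
        P.filter (fun B => (B ∩ V2).Nonempty) = {Bv} := by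
      rw [← Finset.filter_and]
      ext B
      simp only [Finset.mem_filter, Finset.mem_singleton]
      constructor
      · rintro ⟨hBP, ⟨u1, hu1m⟩, ⟨u2, hu2m⟩⟩
        refine hbu B hBP ?_
        by_contra hvB
        rcases side_of_block hV hsplit hsep (hconn B hBP) hvB with h | h
        · obtain ⟨h2B, h2V⟩ := Finset.mem_inter.1 hu2m
          exact hvB (hsep u2 (h h2B) h2V ▸ h2B)
        · obtain ⟨h1B, h1V⟩ := Finset.mem_inter.1 hu1m
          exact hvB (hsep u1 h1V (h h1B) ▸ h1B)
      · rintro rfl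
        exact ⟨hBvP, ⟨v, Finset.mem_inter.2 ⟨hvBv, hv1⟩⟩, ⟨v, Finset.mem_inter.2 ⟨hvBv, hv2⟩⟩⟩
    have hcards := Finset.card_union_add_card_inter
      (P.filter (fun B => (B ∩ V1).Nonempty)) (P.filter (fun B => (B ∩ V2).Nonempty))
    rw [hun, hint, Finset.card_singleton] at hcards
    show x ^ (P.card + 1) = x ^ _ * x ^ _
    rw [hcard1, hcard2, ← pow_add, hcards]

/-- Splitting on an empty or one-vertex separating set: if `G` splits into edge-disjoint
subgraphs `G¹`, `G²` on vertex sets `V¹`, `V²` covering `V`, then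
`V¹ ∩ V² = ∅` gives `Q(G,x) = Q(G¹,x)·Q(G²,x)` and `V¹ ∩ V² = {v}` gives
`x·Q(G,x) = Q(G¹,x)·Q(G²,x)`. -/
theorem splitting_small_separator (G G1 G2 : SimpleGraph V) (V1 V2 : Finset V)
    (hV : V1 ∪ V2 = Finset.univ)
    (hG1V : ∀ u v : V, G1.Adj u v → u ∈ V1 ∧ v ∈ V1)
    (hG2V : ∀ u v : V, G2.Adj u v → u ∈ V2 ∧ v ∈ V2)
    (hE : ∀ u v : V, G.Adj u v ↔ (G1.Adj u v ∨ G2.Adj u v))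
    (hEdisj : ∀ u v : V, ¬(G1.Adj u v ∧ G2.Adj u v)) (x : ℤ) :
    (V1 ∩ V2 = ∅ →
      Q G x = Q (G1.induce (V1 : Set V)) x * Q (G2.induce (V2 : Set V)) x) ∧
    (∀ v : V, V1 ∩ V2 = {v} →
      x * Q G x = Q (G1.induce (V1 : Set V)) x * Q (G2.induce (V2 : Set V)) x) := by
  classical
  have hle1 : G1 ≤ G := fun {a b} h => (hE a b).2 (Or.inl h)
  have hle2 : G2 ≤ G := fun {a b} h => (hE a b).2 (Or.inr h)
  have hsplit : ∀ a b : V, G.Adj a b → (a ∈ V1 ∧ b ∈ V1) ∨ (a ∈ V2 ∧ b ∈ V2) := by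
    intro a b h
    rcases (hE a b).1 h with h1 | h2
    · exact Or.inl (hG1V a b h1)
    · exact Or.inr (hG2V a b h2)
  constructor
  · intro hdisj
    have hdisj' : ∀ u : V, u ∈ V1 → u ∈ V2 → False := fun u h1 h2 => by
      have : u ∈ V1 ∩ V2 := Finset.mem_inter.2 ⟨h1, h2⟩
      simp [hdisj] at this
    have hagree1 : ∀ a ∈ V1, ∀ b ∈ V1, (G.Adj a b ↔ G1.Adj a b) := by
      intro a ha b hb
      constructor
      · intro h
        rcases (hE a b).1 h with h1 | h2
        · exact h1
        · exact absurd (hdisj' a ha (hG2V a b h2).1) not_false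
      · exact fun h => (hE a b).2 (Or.inl h)
    have hagree2 : ∀ a ∈ V2, ∀ b ∈ V2, (G.Adj a b ↔ G2.Adj a b) := by
      intro a ha b hb
      constructor
      · intro h
        rcases (hE a b).1 h with h1 | h2
        · exact absurd (hdisj' a (hG1V a b h1).1 ha) not_false
        · exact h2
      · exact fun h => (hE a b).2 (Or.inr h)
    rw [Q_eq_sum_cp_univ, Q_induce, Q_induce]
    exact cp_prod_disjoint hV hdisj hsplit hagree1 hagree2 x
  · intro v hsepEq
    have hv1 : v ∈ V1 := by
      have : v ∈ V1 ∩ V2 := hsepEq ▸ Finset.mem_singleton_self v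
      exact (Finset.mem_inter.1 this).1
    have hv2 : v ∈ V2 := by
      have : v ∈ V1 ∩ V2 := hsepEq ▸ Finset.mem_singleton_self v
      exact (Finset.mem_inter.1 this).2
    have hsep : ∀ u : V, u ∈ V1 → u ∈ V2 → u = v := by
      intro u h1 h2
      have : u ∈ V1 ∩ V2 := Finset.mem_inter.2 ⟨h1, h2⟩
      rw [hsepEq] at this
      exact Finset.mem_singleton.1 this
    have hagree1 : ∀ a ∈ V1, ∀ b ∈ V1, (G.Adj a b ↔ G1.Adj a b) := by
      intro a ha b hb
      constructor
      · intro h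
        rcases (hE a b).1 h with h1 | h2
        · exact h1
        · exact absurd ((hsep a ha (hG2V a b h2).1).trans
            (hsep b hb (hG2V a b h2).2).symm) h.ne
      · exact fun h => (hE a b).2 (Or.inl h)
    have hagree2 : ∀ a ∈ V2, ∀ b ∈ V2, (G.Adj a b ↔ G2.Adj a b) := by
      intro a ha b hb
      constructor
      · intro h
        rcases (hE a b).1 h with h1 | h2
        · exact absurd ((hsep a (hG1V a b h1).1 ha).trans
            (hsep b (hG1V a b h1).2 hb).symm) h.ne
        · exact h2
      · exact fun h => (hE a b).2 (Or.inr h)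
    rw [Q_induce, Q_induce,
      ← cp_prod_artic hV hv1 hv2 hsep hsplit hagree1 hagree2 hle1 hle2 x,
      Q_eq_sum_cp_univ, Finset.mul_sum]
    exact Finset.sum_congr rfl (fun P _ => by ring)
end

section
/- Let C_n be the cycle graph on n ≥ 3 vertices. Then the bivariate partition (minimal cut) polynomial satisfies Q(C_n, x, y) = (x+y)^n − x·y^{n−1}·(n − y) − y^n. -/
open Finset

variable {V : Type*} [Fintype V] [DecidableEq V]

open scoped Classical in
/-- `E(G[π])`: the intra-block edges of `G` with respect to the partition `P`,
i.e. the edges of `G` both of whose endpoints lie in one block of `P`. -/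
noncomputable def intraEdges (G : SimpleGraph V) (P : Finset (Finset V)) :
    Finset (Sym2 V) :=
  Finset.univ.filter (fun e : Sym2 V => e ∈ G.edgeSet ∧ ∃ B ∈ P, ∀ u ∈ e, u ∈ B)

open scoped Classical in
/-- The bivariate partition (minimal cut) polynomial
`Q(G,x,y) = Σ_{π ∈ Π_c(G)} x^{|π|} y^{|E(G[π])|}`. -/
noncomputable def Q2 (G : SimpleGraph V) (x y : ℤ) : ℤ :=
  ∑ P ∈ connParts G, x ^ P.card * y ^ (intraEdges G P).card


open SimpleGraph

open scoped Fin.NatCast Fin.CommRing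

namespace CycleAux

variable {n : ℕ} [NeZero n]

def arc (a : Fin n) (l : ℕ) : Finset (Fin n) :=
  (Finset.range l).image (fun t : ℕ => a + (t : Fin n))

lemma mem_arc {a v : Fin n} {l : ℕ} (hl : l ≤ n) :
    v ∈ arc a l ↔ (v - a).val < l := by
  constructor
  · rintro hv
    simp only [arc, mem_image, mem_range] at hv
    obtain ⟨t, ht, rfl⟩ := hv
    rwa [add_sub_cancel_left, Fin.val_cast_of_lt (ht.trans_le hl)]
  · intro h
    simp only [arc, mem_image, mem_range]
    exact ⟨(v - a).val, h, by rw [Fin.cast_val_eq_self, add_sub_cancel]⟩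

lemma val_one (hn : 2 ≤ n) : (1 : Fin n).val = 1 := by
  have : ((1 : ℕ) : Fin n).val = 1 % n := Fin.val_natCast 1 n
  simpa [Nat.mod_eq_of_lt hn] using this

lemma mem_arc_add {a : Fin n} {l t : ℕ} (ht : t < l) (hl : l ≤ n) :
    a + (t : Fin n) ∈ arc a l := by
  rw [mem_arc hl, add_sub_cancel_left, Fin.val_cast_of_lt (ht.trans_le hl)]
  exact ht


lemma card_arc {a : Fin n} {l : ℕ} (hl : l ≤ n) : (arc a l).card = l := by
  rw [arc, Finset.card_image_of_injOn, Finset.card_range]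
  intro s hs t ht hst
  simp only [mem_coe, mem_range] at hs ht
  have : (s : Fin n) = t := by
    have := add_left_cancel hst
    exact this
  have hs' := Fin.val_cast_of_lt (hs.trans_le hl)
  have ht' := Fin.val_cast_of_lt (ht.trans_le hl)
  rw [← hs', ← ht', this]

lemma arc_eq_univ {a : Fin n} : arc a n = Finset.univ := by
  ext v
  simp [mem_arc le_rfl, (v - a).isLt]

lemma mem_arc_self {a : Fin n} {l : ℕ} (h0 : 0 < l) (hl : l ≤ n) : a ∈ arc a l := by
  rw [mem_arc hl]; simpa using h0


lemma adj_succ (hn : 2 ≤ n) (v : Fin n) : (cycleGraph n).Adj v (v + 1) := by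
  rw [SimpleGraph.cycleGraph_adj']
  right
  rw [add_sub_cancel_left]
  exact val_one hn

lemma arc_connected (hn : 2 ≤ n) {a : Fin n} {l : ℕ} (h0 : 0 < l) (hl : l ≤ n) :
    ((cycleGraph n).induce (arc a l : Set (Fin n))).Connected := by
  have ha : (a : Fin n) ∈ (arc a l : Set (Fin n)) := by
    simpa using mem_arc_add (t := 0) h0 hl
  rw [connected_iff_exists_forall_reachable]
  refine ⟨⟨a, ha⟩, ?_⟩
  rintro ⟨w, hw⟩
  have hw' : (w - a).val < l := by rwa [← mem_arc hl, ← Finset.mem_coe]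
  have key : ∀ t (ht : t < l),
      ((cycleGraph n).induce (arc a l : Set (Fin n))).Reachable
        ⟨a, ha⟩ ⟨a + (t : Fin n), by simpa using mem_arc_add ht hl⟩ := by
    intro t
    induction t with
    | zero =>
      intro _
      have h : a + ((0:ℕ) : Fin n) = a := by simp
      simp only [h]
      exact SimpleGraph.Reachable.refl _
    | succ t ih =>
      intro ht
      have htl : t < l := Nat.lt_of_succ_lt ht
      refine (ih htl).trans (SimpleGraph.Adj.reachable ?_)
      have : (a + ((t+1 : ℕ) : Fin n)) = (a + (t : Fin n)) + 1 := by
        push_cast; ring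
      simp only [SimpleGraph.comap_adj, SimpleGraph.induce,
        Function.Embedding.coe_subtype]
      rw [this]
      exact adj_succ hn _
  have := key (w - a).val hw'
  convert this using 2
  rw [Fin.cast_val_eq_self, add_sub_cancel]

variable {n : ℕ} [NeZero n]


lemma eq_neg_one_of_val {u : Fin n} (h : u.val = n - 1) : u = -1 := by
  rcases Nat.lt_or_ge n 2 with h2 | h2
  · have h1 : n = 1 := by have := n.pos_of_neZero; omega
    subst h1; exact Subsingleton.elim _ _
  · have h1 : u + 1 = 0 := by
      apply Fin.ext
      have hd : (u + 1).val = (u.val + (1 : Fin n).val) % n := by rw [Fin.add_def]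
      rw [hd, h, val_one h2, Fin.val_zero]
      have hp : n - 1 + 1 = n := by omega
      rw [hp, Nat.mod_self]
    linear_combination h1

/-- step lemma: if `y = x + 1` with `x ∈ B` and `a - 1 ∉ B`, labels increase by 1. -/
lemma label_step {B : Finset (Fin n)} {a x : Fin n} (ha : a - 1 ∉ B)
    (hx : x ∈ B) : ((x + 1) - a).val = (x - a).val + 1 := by
  have hne : x - a ≠ -1 := by
    intro h
    have : x = a - 1 := by linear_combination h
    exact ha (this ▸ hx)
  have hv : (x - a).val ≠ n - 1 := fun h => hne (eq_neg_one_of_val h)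
  have hlt : (x - a).val + 1 < n := by
    have := (x - a).isLt
    omega
  have h2 : 2 ≤ n := by
    rcases Nat.lt_or_ge n 2 with h2 | h2
    · have := (x - a).isLt; omega
    · exact h2
  have h3 : (x + 1) - a = (x - a) + 1 := by ring
  have hd : ((x - a) + 1).val = ((x - a).val + (1 : Fin n).val) % n := by rw [Fin.add_def]
  rw [h3, hd, val_one h2, Nat.mod_eq_of_lt hlt]

lemma walk_label {B : Finset (Fin n)} (hn : 2 ≤ n) {a : Fin n} (ha : a - 1 ∉ B)
    {u v : {x // x ∈ (B : Set (Fin n))}}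
    (w : ((cycleGraph n).induce (B : Set (Fin n))).Walk u v) :
    ∀ s : ℕ, ((u : Fin n) - a).val ≤ s → s ≤ ((v : Fin n) - a).val →
      ∃ x ∈ B, (x - a).val = s := by
  induction w with
  | nil =>
    rintro s h1 h2
    exact ⟨_, Finset.mem_coe.mp (Subtype.mem _), le_antisymm h1 h2⟩
  | @cons u u' v h p ih =>
    intro s h1 h2
    rcases eq_or_lt_of_le h1 with rfl | h1'
    · exact ⟨_, Finset.mem_coe.mp (Subtype.mem u), rfl⟩
    have hadj : (cycleGraph n).Adj (u : Fin n) (u' : Fin n) := h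
    have hu : (u : Fin n) ∈ B := by simpa using Subtype.mem u
    have hu' : (u' : Fin n) ∈ B := by simpa using Subtype.mem u'
    have hcase : ((u' : Fin n) - a).val = ((u : Fin n) - a).val + 1 ∨
        ((u : Fin n) - a).val = ((u' : Fin n) - a).val + 1 := by
      rw [SimpleGraph.cycleGraph_adj'] at hadj
      rcases hadj with h' | h'
      · right
        have : (u : Fin n) = (u' : Fin n) + 1 := by
          have : (u:Fin n) - u' = 1 := Fin.ext (by rw [h', val_one hn])
          linear_combination this
        rw [this]; exact label_step ha hu'
      · left
        have : (u' : Fin n) = (u : Fin n) + 1 := by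
          have : (u':Fin n) - u = 1 := Fin.ext (by rw [h', val_one hn])
          linear_combination this
        rw [this]; exact label_step ha hu
    rcases hcase with hc | hc
    · exact ih s (by omega) h2
    · exact ih s (by omega) h2

lemma exists_start {B : Finset (Fin n)} (hne : B.Nonempty) (hB : B ≠ Finset.univ) :
    ∃ a ∈ B, a - 1 ∉ B := by
  by_contra hcon
  push_neg at hcon
  obtain ⟨b, hb⟩ := hne
  have key : ∀ t : ℕ, b - (t : Fin n) ∈ B := by
    intro t
    induction t with
    | zero => simpa using hb
    | succ t ih =>
      have : b - ((t+1 : ℕ) : Fin n) = (b - (t : Fin n)) - 1 := by push_cast; ring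
      rw [this]
      exact hcon _ ih
  apply hB
  ext v
  simp only [Finset.mem_univ, iff_true]
  have := key ((b - v).val)
  rwa [Fin.cast_val_eq_self, sub_sub_cancel] at this

lemma label_inj {a x v : Fin n} (h : (x - a).val = (v - a).val) : x = v := by
  have : x - a = v - a := Fin.ext h
  linear_combination this

lemma connected_eq_arc {B : Finset (Fin n)} (hn : 2 ≤ n)
    (hB : ((cycleGraph n).induce (B : Set (Fin n))).Connected) :
    ∃ a ∈ B, B = arc a B.card := by
  have hne : B.Nonempty := by
    obtain ⟨⟨x, hx⟩⟩ := hB.nonempty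
    exact ⟨x, Finset.mem_coe.mp hx⟩
  rcases eq_or_ne B Finset.univ with rfl | hBu
  · obtain ⟨a, ha⟩ := hne
    refine ⟨a, ha, ?_⟩
    rw [Finset.card_univ, Fintype.card_fin, arc_eq_univ]
  obtain ⟨a, haB, ha⟩ := exists_start hne hBu
  -- every label below a label of an element of B is attained
  have claim : ∀ v ∈ B, ∀ s ≤ (v - a).val, ∃ x ∈ B, (x - a).val = s := by
    intro v hv s hs
    have hreach := hB.preconnected ⟨a, Finset.mem_coe.mpr haB⟩ ⟨v, Finset.mem_coe.mpr hv⟩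
    obtain ⟨w⟩ := hreach
    refine walk_label hn ha w s ?_ ?_
    · simp
    · exact hs
  set L := B.image (fun v => (v - a).val) with hL
  have hLcard : L.card = B.card := Finset.card_image_of_injOn (fun x _ y _ h => label_inj h)
  have hmem : ∀ s, s ∈ L ↔ s < L.card := by
    intro s
    constructor
    · intro hs
      obtain ⟨v, hv, hvs⟩ := Finset.mem_image.mp hs
      have hsub : Finset.range (s + 1) ⊆ L := by
        intro t ht
        rw [Finset.mem_range] at ht
        obtain ⟨x, hx, hxs⟩ := claim v hv t (by omega)
        exact Finset.mem_image.mpr ⟨x, hx, hxs⟩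
      have := Finset.card_le_card hsub
      rw [Finset.card_range] at this
      omega
    · intro hs
      by_contra hsL
      have hsub : L ⊆ Finset.range s := by
        intro t ht
        rw [Finset.mem_range]
        by_contra hts
        obtain ⟨v, hv, hvs⟩ := Finset.mem_image.mp ht
        obtain ⟨x, hx, hxs⟩ := claim v hv s (by omega)
        exact hsL (Finset.mem_image.mpr ⟨x, hx, hxs⟩)
      have := Finset.card_le_card hsub
      rw [Finset.card_range] at this
      omega
  refine ⟨a, haB, ?_⟩
  have hcard_le : B.card ≤ n := by
    simpa using Finset.card_le_card (Finset.subset_univ B)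
  ext v
  rw [mem_arc hcard_le]
  constructor
  · intro hv
    have : (v - a).val ∈ L := Finset.mem_image.mpr ⟨v, hv, rfl⟩
    rw [hmem, hLcard] at this
    exact this
  · intro hv
    have : (v - a).val ∈ L := (hmem _).mpr (by omega)
    obtain ⟨x, hx, hxs⟩ := Finset.mem_image.mp this
    rwa [← label_inj hxs]


open scoped Classical

noncomputable def starts (P : Finset (Finset (Fin n))) : Finset (Fin n) :=
  Finset.univ.filter (fun v => ¬ ∃ B ∈ P, v - 1 ∈ B ∧ v ∈ B)

lemma mem_starts {P : Finset (Finset (Fin n))} {v : Fin n} :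
    v ∈ starts P ↔ ¬ ∃ B ∈ P, v - 1 ∈ B ∧ v ∈ B := by
  simp [starts]

lemma gap_exists {S : Finset (Fin n)} {a : Fin n} (ha : a ∈ S) :
    ∃ t : ℕ, 0 < t ∧ a + (t : Fin n) ∈ S :=
  ⟨n, n.pos_of_neZero, by simpa [Fin.natCast_self] using ha⟩

noncomputable def gap (S : Finset (Fin n)) (a : Fin n) : ℕ :=
  if h : ∃ t : ℕ, 0 < t ∧ a + (t : Fin n) ∈ S then Nat.find h else 0

lemma gap_pos {S : Finset (Fin n)} {a : Fin n} (ha : a ∈ S) : 0 < gap S a := by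
  rw [gap, dif_pos (gap_exists ha)]
  exact (Nat.find_spec (gap_exists ha)).1

lemma gap_mem {S : Finset (Fin n)} {a : Fin n} (ha : a ∈ S) :
    a + ((gap S a : ℕ) : Fin n) ∈ S := by
  rw [gap, dif_pos (gap_exists ha)]
  exact (Nat.find_spec (gap_exists ha)).2

lemma gap_min {S : Finset (Fin n)} {a : Fin n} (ha : a ∈ S) {t : ℕ}
    (ht0 : 0 < t) (ht : t < gap S a) : a + (t : Fin n) ∉ S := by
  rw [gap, dif_pos (gap_exists ha)] at ht
  intro hmem
  exact Nat.find_min (gap_exists ha) ht ⟨ht0, hmem⟩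

lemma gap_le {S : Finset (Fin n)} {a : Fin n} (ha : a ∈ S) : gap S a ≤ n := by
  by_contra h
  exact gap_min ha n.pos_of_neZero (by omega) (by simpa [Fin.natCast_self] using ha)

lemma gap_lt {S : Finset (Fin n)} {a : Fin n} (ha : a ∈ S) (hS2 : 2 ≤ S.card) :
    gap S a < n := by
  obtain ⟨b, hb, hba⟩ := Finset.exists_mem_ne hS2 a
  by_contra h
  have hlt : 0 < (b - a).val := by
    rcases Nat.eq_zero_or_pos (b - a).val with h0 | h0
    · have hz : b - a = 0 := Fin.ext (by simpa using h0)
      exact absurd (by linear_combination hz : b = a) hba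
    · exact h0
  have := gap_min ha hlt (by have := (b - a).isLt; omega)
  rw [Fin.cast_val_eq_self, add_sub_cancel] at this
  exact this hb

noncomputable def blocksOf (S : Finset (Fin n)) : Finset (Finset (Fin n)) :=
  if S = ∅ then {Finset.univ} else S.image (fun a => arc a (gap S a))

lemma sub_one_val {u : Fin n} (h : 0 < u.val) : (u - 1).val = u.val - 1 := by
  have h1 : u = ((u.val : ℕ) : Fin n) := (Fin.cast_val_eq_self u).symm
  have h2 : u - 1 = ((u.val - 1 : ℕ) : Fin n) := by
    have hc : ((u.val - 1 : ℕ) : Fin n) + 1 = ((u.val - 1 + 1 : ℕ) : Fin n) := by push_cast; ring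
    rw [sub_eq_iff_eq_add, hc, Nat.sub_add_cancel h, Fin.cast_val_eq_self]
  rw [h2, Fin.val_cast_of_lt (by have := u.isLt; omega)]

/-- covering: every vertex lies in a block -/
lemma exists_block {S : Finset (Fin n)} (hS : S.Nonempty) (v : Fin n) :
    ∃ a ∈ S, v ∈ arc a (gap S a) := by
  obtain ⟨s0, hs0⟩ := hS
  have hex : ∃ t : ℕ, v - (t : Fin n) ∈ S :=
    ⟨(v - s0).val, by rwa [Fin.cast_val_eq_self, sub_sub_cancel]⟩
  set d := Nat.find hex with hd
  have hdS : v - (d : Fin n) ∈ S := Nat.find_spec hex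
  set a := v - (d : Fin n) with hadef
  have hdlt : d < n := by
    have := Nat.find_min' hex (m := (v - s0).val) (by rwa [Fin.cast_val_eq_self, sub_sub_cancel])
    have := (v - s0).isLt
    omega
  have hva : (v - a).val = d := by
    rw [hadef, sub_sub_cancel, Fin.val_cast_of_lt hdlt]
  refine ⟨a, hdS, ?_⟩
  rw [mem_arc (gap_le hdS), hva]
  by_contra h
  push_neg at h
  have hg : gap S a ≤ d := h
  have hgpos := gap_pos hdS
  have hv : v = a + ((d : ℕ) : Fin n) := by rw [hadef]; ring
  have key : a + ((gap S a : ℕ) : Fin n) = v - ((d - gap S a : ℕ) : Fin n) := by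
    have hc : ((d : ℕ) : Fin n) = ((d - gap S a : ℕ) : Fin n) + ((gap S a : ℕ) : Fin n) := by
      rw [← Nat.cast_add, Nat.sub_add_cancel hg]
    rw [hv, hc]; ring
  have hmem := gap_mem hdS
  rw [key] at hmem
  exact Nat.find_min hex (by omega) hmem

/-- disjointness: a vertex is in at most one block -/
lemma block_unique {S : Finset (Fin n)} {a a' v : Fin n} (ha : a ∈ S) (ha' : a' ∈ S)
    (hv : v ∈ arc a (gap S a)) (hv' : v ∈ arc a' (gap S a')) : a = a' := by
  rw [mem_arc (gap_le ha)] at hv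
  rw [mem_arc (gap_le ha')] at hv'
  set t := (v - a).val with htdef
  set t' := (v - a').val with ht'def
  by_contra hne
  have hvt : v = a + (t : Fin n) := by rw [htdef, Fin.cast_val_eq_self, add_sub_cancel]
  have hvt' : v = a' + (t' : Fin n) := by rw [ht'def, Fin.cast_val_eq_self, add_sub_cancel]
  have htne : t ≠ t' := by
    intro h
    apply hne
    have : a + (t : Fin n) = a' + (t : Fin n) := by rw [hvt] at hvt'; rw [hvt', h]
    exact add_right_cancel this
  -- wlog t' < t : then a' = a + (t - t') contradicting gap_min for a
  rcases Nat.lt_or_ge t' t with hlt | hge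
  · have key : a + ((t - t' : ℕ) : Fin n) = a' := by
      have hc : ((t : ℕ) : Fin n) = ((t - t' : ℕ) : Fin n) + ((t' : ℕ) : Fin n) := by
        rw [← Nat.cast_add, Nat.sub_add_cancel (le_of_lt hlt)]
      have := hvt.symm.trans hvt'
      rw [hc] at this
      linear_combination this
    exact gap_min ha (by omega) (by omega) (key ▸ ha')
  · have hlt : t < t' := by omega
    have key : a' + ((t' - t : ℕ) : Fin n) = a := by
      have hc : ((t' : ℕ) : Fin n) = ((t' - t : ℕ) : Fin n) + ((t : ℕ) : Fin n) := by
        rw [← Nat.cast_add, Nat.sub_add_cancel (le_of_lt hlt)]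
      have := hvt'.symm.trans hvt
      rw [hc] at this
      linear_combination this
    exact gap_min ha' (by omega) (by omega) (key ▸ ha)

lemma blocksOf_empty : blocksOf (∅ : Finset (Fin n)) = {Finset.univ} := by
  simp [blocksOf]

lemma blocksOf_nonempty {S : Finset (Fin n)} (hS : S.Nonempty) :
    blocksOf S = S.image (fun a => arc a (gap S a)) := by
  rw [blocksOf, if_neg hS.ne_empty]

lemma isPartition_univ : IsPartition ({Finset.univ} : Finset (Finset (Fin n))) := by
  constructor
  · simp only [Finset.mem_singleton]
    intro h
    have : (0 : Fin n) ∈ (∅ : Finset (Fin n)) := h ▸ Finset.mem_univ 0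
    simp at this
  · intro v
    refine ⟨Finset.univ, ⟨Finset.mem_singleton_self _, Finset.mem_univ v⟩, ?_⟩
    rintro B ⟨hB, -⟩
    exact Finset.mem_singleton.mp hB

lemma isPartition_blocksOf {S : Finset (Fin n)} (hS : S.Nonempty) :
    IsPartition (blocksOf S) := by
  rw [blocksOf_nonempty hS]
  constructor
  · intro h
    obtain ⟨a, ha, hae⟩ := Finset.mem_image.mp h
    have := mem_arc_self (a := a) (gap_pos ha) (gap_le ha)
    rw [hae] at this
    simp at this
  · intro v
    obtain ⟨a, haS, hva⟩ := exists_block hS v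
    refine ⟨arc a (gap S a), ⟨Finset.mem_image_of_mem _ haS, hva⟩, ?_⟩
    rintro B ⟨hB, hvB⟩
    obtain ⟨a', ha'S, rfl⟩ := Finset.mem_image.mp hB
    rw [block_unique ha'S haS hvB hva]

lemma isConnPartition_blocksOf {S : Finset (Fin n)} (hn : 2 ≤ n) (hS1 : S.card ≠ 1) :
    IsConnPartition (cycleGraph n) (blocksOf S) := by
  rcases eq_or_ne S ∅ with rfl | hSe
  · rw [blocksOf_empty]
    refine ⟨isPartition_univ, ?_⟩
    intro B hB
    rw [Finset.mem_singleton] at hB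
    subst hB
    have : ((Finset.univ : Finset (Fin n)) : Set (Fin n)) = Set.univ := by simp
    rw [this]
    exact (SimpleGraph.induceUnivIso (cycleGraph n)).connected_iff.mpr
      (by have : n - 1 + 1 = n := by omega
          rw [← this]; exact SimpleGraph.cycleGraph_connected)
  · have hS : S.Nonempty := Finset.nonempty_of_ne_empty hSe
    refine ⟨isPartition_blocksOf hS, ?_⟩
    intro B hB
    rw [blocksOf_nonempty hS] at hB
    obtain ⟨a, haS, rfl⟩ := Finset.mem_image.mp hB
    exact arc_connected hn (gap_pos haS) (gap_le haS)

lemma starts_blocksOf {S : Finset (Fin n)} (hS2 : 2 ≤ S.card) :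
    starts (blocksOf S) = S := by
  have hS : S.Nonempty := Finset.card_pos.mp (by omega)
  ext v
  rw [mem_starts, blocksOf_nonempty hS]
  constructor
  · -- v ∈ starts → v ∈ S  (contrapositive: v ∉ S → v-1,v in same block)
    intro hv
    by_contra hvS
    apply hv
    obtain ⟨a, haS, hva⟩ := exists_block hS v
    refine ⟨arc a (gap S a), Finset.mem_image_of_mem _ haS, ?_, hva⟩
    rw [mem_arc (gap_le haS)] at hva ⊢
    have ht0 : 0 < (v - a).val := by
      rcases Nat.eq_zero_or_pos (v - a).val with h0 | h0
      · exfalso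
        have hz : v - a = 0 := Fin.ext (by simpa using h0)
        have : v = a := by linear_combination hz
        exact hvS (this ▸ haS)
      · exact h0
    have : v - 1 - a = (v - a) - 1 := by ring
    rw [this, sub_one_val ht0]
    omega
  · -- v ∈ S → no block contains both v-1 and v
    rintro hvS ⟨B, hB, hv1B, hvB⟩
    obtain ⟨a, haS, rfl⟩ := Finset.mem_image.mp hB
    -- the block containing v ∈ S must start at v
    have hav : a = v := by
      rw [mem_arc (gap_le haS)] at hvB
      by_contra hne
      have ht0 : 0 < (v - a).val := by
        rcases Nat.eq_zero_or_pos (v - a).val with h0 | h0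
        · exfalso
          have hz : v - a = 0 := Fin.ext (by simpa using h0)
          exact hne (by linear_combination -hz)
        · exact h0
      have := gap_min haS ht0 hvB
      rw [Fin.cast_val_eq_self, add_sub_cancel] at this
      exact this hvS
    subst hav
    rw [mem_arc (gap_le haS)] at hv1B
    have : (a - 1 - a).val = n - 1 := by
      have : a - 1 - a = -1 := by ring
      rw [this]
      have h2 : 2 ≤ n := by
        have h1 := Finset.card_le_card (Finset.subset_univ S)
        rw [Finset.card_univ, Fintype.card_fin] at h1
        omega
      have hm1 : (-1 : Fin n) = ((n - 1 : ℕ) : Fin n) := by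
        have : ((n - 1 : ℕ) : Fin n) + 1 = ((n - 1 + 1 : ℕ) : Fin n) := by push_cast; ring
        rw [eq_comm, ← sub_eq_iff_eq_add] at this
        rw [← this]
        have hn1 : n - 1 + 1 = n := by omega
        rw [hn1, Fin.natCast_self]
        ring
      rw [hm1, Fin.val_cast_of_lt (by omega)]
    rw [this] at hv1B
    have := gap_lt haS hS2
    omega

lemma part_unique {P : Finset (Finset (Fin n))} (hP : IsPartition P) {B C : Finset (Fin n)}
    {v : Fin n} (hB : B ∈ P) (hC : C ∈ P) (hvB : v ∈ B) (hvC : v ∈ C) : B = C := by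
  obtain ⟨D, -, hu⟩ := hP.2 v
  rw [hu B ⟨hB, hvB⟩, hu C ⟨hC, hvC⟩]

lemma eq_singleton_univ {P : Finset (Finset (Fin n))} (hP : IsPartition P)
    (hu : Finset.univ ∈ P) : P = {Finset.univ} := by
  ext B
  rw [Finset.mem_singleton]
  constructor
  · intro hB
    rcases Finset.eq_empty_or_nonempty B with rfl | ⟨v, hv⟩
    · exact absurd hB hP.1
    · exact part_unique hP hB hu hv (Finset.mem_univ v)
  · rintro rfl; exact hu

lemma starts_singleton_univ : starts ({Finset.univ} : Finset (Finset (Fin n))) = ∅ := by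
  ext v
  simp only [Finset.notMem_empty, iff_false, mem_starts, not_not]
  exact ⟨Finset.univ, Finset.mem_singleton_self _, Finset.mem_univ _, Finset.mem_univ _⟩

lemma eq_univ_of_starts_empty {P : Finset (Finset (Fin n))} (hP : IsPartition P)
    (hS : starts P = ∅) : P = {Finset.univ} := by
  have hall : ∀ v : Fin n, ∃ B ∈ P, v - 1 ∈ B ∧ v ∈ B := by
    intro v
    by_contra h
    have : v ∈ starts P := mem_starts.mpr h
    rw [hS] at this
    simp at this
  obtain ⟨B0, ⟨hB0, h0B0⟩, -⟩ := hP.2 0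
  have key : ∀ t : ℕ, (0 : Fin n) - (t : Fin n) ∈ B0 := by
    intro t
    induction t with
    | zero => simpa using h0B0
    | succ t ih =>
      obtain ⟨C, hC, hC1, hC2⟩ := hall ((0 : Fin n) - (t : Fin n))
      have hCB : C = B0 := part_unique hP hC hB0 hC2 ih
      have : (0:Fin n) - ((t+1 : ℕ) : Fin n) = ((0:Fin n) - (t : Fin n)) - 1 := by
        push_cast; ring
      rw [this]
      exact hCB ▸ hC1
  have hBu : B0 = Finset.univ := by
    ext v
    simp only [Finset.mem_univ, iff_true]
    have := key ((0 - v).val)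
    rwa [Fin.cast_val_eq_self, sub_sub_cancel] at this
  exact eq_singleton_univ hP (hBu ▸ hB0)

lemma not_mem_arc_sub_one {a : Fin n} {l : ℕ} (hl : l < n) : a - 1 ∉ arc a l := by
  rw [mem_arc (le_of_lt hl)]
  have h1 : a - 1 - a = -1 := by ring
  have h2 : 2 ≤ n ∨ n = 1 := by have := n.pos_of_neZero; omega
  rcases h2 with h2 | h2
  · have hm1 : ((-1 : Fin n)).val = n - 1 := by
      have : ((n - 1 : ℕ) : Fin n) = -1 := by
        have hc : ((n - 1 : ℕ) : Fin n) + 1 = ((n - 1 + 1 : ℕ) : Fin n) := by push_cast; ring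
        have hn1 : n - 1 + 1 = n := by omega
        rw [eq_neg_iff_add_eq_zero, hc, hn1, Fin.natCast_self]
      rw [← this, Fin.val_cast_of_lt (by omega)]
    rw [h1, hm1]
    omega
  · omega

lemma mem_arc_sub_one {a v : Fin n} {l : ℕ} (hl : l ≤ n) (hv : v ∈ arc a l)
    (hva : v ≠ a) : v - 1 ∈ arc a l := by
  rw [mem_arc hl] at hv ⊢
  have ht0 : 0 < (v - a).val := by
    rcases Nat.eq_zero_or_pos (v - a).val with h0 | h0
    · exact absurd (by linear_combination (Fin.ext (by simpa using h0) : v - a = 0) : v = a) hva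
    · exact h0
  have : v - 1 - a = (v - a) - 1 := by ring
  rw [this, sub_one_val ht0]
  omega

lemma gap_eq {S : Finset (Fin n)} {a : Fin n} (ha : a ∈ S) {g : ℕ} (hg0 : 0 < g)
    (hmem : a + (g : Fin n) ∈ S) (hmin : ∀ t : ℕ, 0 < t → t < g → a + (t : Fin n) ∉ S) :
    gap S a = g := by
  refine le_antisymm ?_ ?_
  · rw [gap, dif_pos (gap_exists ha)]
    exact Nat.find_le ⟨hg0, hmem⟩
  · by_contra h
    exact hmin _ (gap_pos ha) (by omega) (gap_mem ha)

lemma label_add {a : Fin n} {t : ℕ} (ht : t < n) : (a + (t : Fin n) - a).val = t := by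
  rw [add_sub_cancel_left, Fin.val_cast_of_lt ht]

lemma block_eq_arc_gap {P : Finset (Finset (Fin n))} (hn : 2 ≤ n)
    (hP : IsConnPartition (cycleGraph n) P) (hne : (starts P).Nonempty)
    {B : Finset (Fin n)} (hB : B ∈ P) :
    ∃ a, a ∈ starts P ∧ a ∈ B ∧ B = arc a (gap (starts P) a) ∧
      a + ((gap (starts P) a : ℕ) : Fin n) ∈ starts P ∧ gap (starts P) a < n := by
  have hBu : B ≠ Finset.univ := by
    rintro rfl
    rw [eq_singleton_univ hP.1 hB, starts_singleton_univ] at hne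
    exact absurd rfl hne.ne_empty
  obtain ⟨a, haB, hBarc⟩ := connected_eq_arc hn (hP.2 B hB)
  set l := B.card with hldef
  have hlpos : 0 < l := Finset.card_pos.mpr ⟨a, haB⟩
  have hln : l < n := by
    have := Finset.card_lt_card (Finset.ssubset_univ_iff.mpr hBu)
    rwa [Finset.card_univ, Fintype.card_fin] at this
  have ha1B : a - 1 ∉ B := by rw [hBarc]; exact not_mem_arc_sub_one hln
  have haS : a ∈ starts P := by
    rw [mem_starts]
    rintro ⟨C, hC, hC1, hC2⟩
    exact ha1B ((part_unique hP.1 hC hB hC2 haB) ▸ hC1)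
  -- the vertex just after the block is a start
  have hvB : a + (l : Fin n) ∉ B := by
    rw [hBarc, mem_arc (le_of_lt hln), label_add hln]
    omega
  have hv1B : a + (l : Fin n) - 1 ∈ B := by
    rw [hBarc, mem_arc (le_of_lt hln)]
    have hl0 : 0 < (a + (l : Fin n) - a).val := by rw [label_add hln]; omega
    have : a + (l : Fin n) - 1 - a = (a + (l : Fin n) - a) - 1 := by ring
    rw [this, sub_one_val hl0, label_add hln]
    omega
  have hvS : a + (l : Fin n) ∈ starts P := by
    rw [mem_starts]
    rintro ⟨C, hC, hC1, hC2⟩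
    exact hvB ((part_unique hP.1 hC hB hC1 hv1B) ▸ hC2)
  -- interior vertices are not starts
  have hint : ∀ t : ℕ, 0 < t → t < l → a + (t : Fin n) ∉ starts P := by
    intro t ht0 htl
    rw [mem_starts, not_not]
    have hwB : a + (t : Fin n) ∈ B := by
      rw [hBarc, mem_arc (le_of_lt hln), label_add (by omega)]
      exact htl
    have hwa : a + (t : Fin n) ≠ a := by
      intro h
      have : ((t : ℕ) : Fin n) = 0 := by linear_combination h
      have := congrArg Fin.val this
      rw [Fin.val_cast_of_lt (by omega), Fin.val_zero] at this
      omega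
    refine ⟨B, hB, ?_, hwB⟩
    rw [hBarc] at hwB ⊢
    exact mem_arc_sub_one (le_of_lt hln) hwB hwa
  have hgap : gap (starts P) a = l := gap_eq haS hlpos hvS hint
  exact ⟨a, haS, haB, by rw [hgap, ← hBarc], by rw [hgap]; exact hvS, by rw [hgap]; exact hln⟩

lemma start_block {P : Finset (Finset (Fin n))} (hn : 2 ≤ n)
    (hP : IsConnPartition (cycleGraph n) P) {s : Fin n} (hs : s ∈ starts P) :
    ∃ B ∈ P, B = arc s (gap (starts P) s) := by
  obtain ⟨B, ⟨hB, hsB⟩, -⟩ := hP.1.2 s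
  obtain ⟨a, haS, haB, hBarc, -, hgn⟩ := block_eq_arc_gap hn hP ⟨s, hs⟩ hB
  have hs1B : s - 1 ∉ B := by
    intro h
    exact (mem_starts.mp hs) ⟨B, hB, h, hsB⟩
  have hsa : s = a := by
    by_contra hne
    apply hs1B
    rw [hBarc] at hsB ⊢
    exact mem_arc_sub_one (gap_le haS) hsB hne
  exact ⟨B, hB, by rw [hBarc, hsa]⟩

lemma blocksOf_starts {P : Finset (Finset (Fin n))} (hn : 2 ≤ n)
    (hP : IsConnPartition (cycleGraph n) P) : blocksOf (starts P) = P := by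
  rcases eq_or_ne (starts P) ∅ with hS | hS
  · rw [hS, blocksOf_empty, eq_univ_of_starts_empty hP.1 hS]
  · have hSne : (starts P).Nonempty := Finset.nonempty_of_ne_empty hS
    rw [blocksOf_nonempty hSne]
    ext C
    constructor
    · intro hC
      obtain ⟨s, hsS, rfl⟩ := Finset.mem_image.mp hC
      obtain ⟨B, hB, hBe⟩ := start_block hn hP hsS
      exact hBe ▸ hB
    · intro hC
      obtain ⟨a, haS, -, hCe, -, -⟩ := block_eq_arc_gap hn hP hSne hC
      exact Finset.mem_image.mpr ⟨a, haS, hCe.symm⟩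

lemma starts_card_ne_one {P : Finset (Finset (Fin n))} (hn : 2 ≤ n)
    (hP : IsConnPartition (cycleGraph n) P) : (starts P).card ≠ 1 := by
  intro h1
  obtain ⟨s, hsS⟩ := Finset.card_pos.mp (show 0 < (starts P).card by omega)
  have hSs : starts P = {s} := Finset.eq_singleton_iff_unique_mem.mpr
    ⟨hsS, fun x hx => by
      by_contra hne
      have := Finset.one_lt_card_iff.mpr ⟨x, s, hx, hsS, hne⟩
      omega⟩
  obtain ⟨B, ⟨hB, hsB⟩, -⟩ := hP.1.2 s
  obtain ⟨a, haS, -, -, hvS, hgn⟩ := block_eq_arc_gap hn hP ⟨s, hsS⟩ hB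
  set g := gap (starts P) a with hgdef
  have hgpos := gap_pos haS
  rw [← hgdef] at hgpos
  have ha : a = s := by
    have := haS; rw [hSs, Finset.mem_singleton] at this; exact this
  have hmem : a + ((g : ℕ) : Fin n) = s := by
    have := hvS; rw [hSs, Finset.mem_singleton] at this; exact this
  rw [ha] at hmem
  have hg0 : ((g : ℕ) : Fin n) = 0 := by linear_combination hmem
  have := congrArg Fin.val hg0
  rw [Fin.val_cast_of_lt hgn, Fin.val_zero] at this
  omega

lemma blocksOf_card {S : Finset (Fin n)} (hS : S.Nonempty) : (blocksOf S).card = S.card := by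
  rw [blocksOf_nonempty hS]
  apply Finset.card_image_of_injOn
  intro a ha a' ha' h
  simp only [Finset.mem_coe] at ha ha'
  by_contra hne
  have h' : arc a (gap S a) = arc a' (gap S a') := h
  have ha'mem : a' ∈ arc a (gap S a) := by
    rw [h']; exact mem_arc_self (a := a') (gap_pos ha') (gap_le ha')
  rw [mem_arc (gap_le ha)] at ha'mem
  have ht0 : 0 < (a' - a).val := by
    rcases Nat.eq_zero_or_pos (a' - a).val with h0 | h0
    · exact absurd (by linear_combination -(Fin.ext (by simpa using h0) : a' - a = 0) : a = a') hne
    · exact h0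
  have := gap_min ha ht0 ha'mem
  rw [Fin.cast_val_eq_self, add_sub_cancel] at this
  exact this ha'

lemma edge_map_inj (hn : 3 ≤ n) : Function.Injective (fun v : Fin n => s(v - 1, v)) := by
  intro v w h
  simp only [Sym2.eq, Sym2.rel_iff', Prod.mk.injEq, Prod.swap_prod_mk] at h
  rcases h with ⟨-, h⟩ | ⟨h1, h2⟩
  · exact h
  · exfalso
    have : (2 : Fin n) = 0 := by linear_combination h2 - h1
    have h2v := congrArg Fin.val this
    have : ((2 : ℕ) : Fin n) = (2 : Fin n) := by push_cast; ring
    rw [← this, Fin.val_cast_of_lt (by omega), Fin.val_zero] at h2v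
    omega

lemma adj_sub_one (hn : 3 ≤ n) (v : Fin n) : (cycleGraph n).Adj (v - 1) v := by
  rw [SimpleGraph.cycleGraph_adj']
  right
  have : v - (v - 1) = 1 := by ring
  rw [this, val_one (by omega)]

open scoped Classical in
lemma intra_card {P : Finset (Finset (Fin n))} (hn : 3 ≤ n) :
    (intraEdges (cycleGraph n) P).card = n - (starts P).card := by
  have himg : intraEdges (cycleGraph n) P
      = (Finset.univ.filter (fun v : Fin n => v ∉ starts P)).image
          (fun v => s(v - 1, v)) := by
    ext e
    simp only [intraEdges, Finset.mem_filter, Finset.mem_univ, true_and, Finset.mem_image]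
    constructor
    · rintro ⟨hadj, B, hB, hall⟩
      induction e using Sym2.ind with
      | _ u w =>
        rw [SimpleGraph.mem_edgeSet, SimpleGraph.cycleGraph_adj'] at hadj
        have huw : w = u - 1 ∨ u = w - 1 := by
          rcases hadj with h | h
          · left
            have : u - w = 1 := Fin.ext (by rw [h, val_one (by omega)])
            linear_combination -this
          · right
            have : w - u = 1 := Fin.ext (by rw [h, val_one (by omega)])
            linear_combination -this
        rcases huw with rfl | rfl
        · refine ⟨u, ?_, by rw [Sym2.eq_swap]⟩
          simp only [Finset.mem_filter, Finset.mem_univ, true_and, mem_starts, not_not]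
          exact ⟨B, hB, hall _ (by simp), hall _ (by simp)⟩
        · refine ⟨w, ?_, rfl⟩
          simp only [Finset.mem_filter, Finset.mem_univ, true_and, mem_starts, not_not]
          exact ⟨B, hB, hall _ (by simp), hall _ (by simp)⟩
    · rintro ⟨v, hv, rfl⟩
      simp only [Finset.mem_filter, Finset.mem_univ, true_and, mem_starts, not_not] at hv
      obtain ⟨B, hB, hv1B, hvB⟩ := hv
      refine ⟨(SimpleGraph.mem_edgeSet (cycleGraph n)).mpr (adj_sub_one hn v), B, hB, ?_⟩
      intro u hu
      rw [Sym2.mem_iff] at hu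
      rcases hu with rfl | rfl
      · exact hv1B
      · exact hvB
  rw [himg, Finset.card_image_of_injective _ (edge_map_inj hn)]
  have : Finset.univ.filter (fun v : Fin n => v ∉ starts P) = Finset.univ \ starts P := by
    ext v; simp
  rw [this, Finset.card_sdiff_of_subset (Finset.subset_univ _), Finset.card_univ, Fintype.card_fin]

end CycleAux

/-- For the cycle `C_n` with `n ≥ 3`,
`Q(C_n,x,y) = (x+y)^n - x·y^{n-1}·(n-y) - y^n`. -/
theorem cycle_bivariate (n : ℕ) (hn : 3 ≤ n) (x y : ℤ) :
    Q2 (SimpleGraph.cycleGraph n) x y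
      = (x + y) ^ n - x * y ^ (n - 1) * ((n : ℤ) - y) - y ^ n := by
  classical
  haveI : NeZero n := ⟨by omega⟩
  have h2 : 2 ≤ n := by omega
  set A : Finset (Finset (Fin n)) := Finset.univ.filter (fun S => ¬ S.card = 1) with hA
  have hmemA : ∀ S : Finset (Fin n), S ∈ A ↔ S.card ≠ 1 := by
    intro S; simp [hA]
  have hconn : connParts (SimpleGraph.cycleGraph n) = A.image CycleAux.blocksOf := by
    ext P
    simp only [connParts, Finset.mem_filter, Finset.mem_univ, true_and, Finset.mem_image, hA]
    constructor
    · intro hP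
      exact ⟨CycleAux.starts P, by simpa using CycleAux.starts_card_ne_one h2 hP,
        CycleAux.blocksOf_starts h2 hP⟩
    · rintro ⟨S, hS1, rfl⟩
      exact CycleAux.isConnPartition_blocksOf h2 (by simpa using hS1)
  have hstar : ∀ S : Finset (Fin n), S.card ≠ 1 → CycleAux.starts (CycleAux.blocksOf S) = S := by
    intro S hS1
    rcases eq_or_ne S ∅ with rfl | hSe
    · rw [CycleAux.blocksOf_empty, CycleAux.starts_singleton_univ]
    · have hge : 2 ≤ S.card := by
        have := Finset.card_pos.mpr (Finset.nonempty_of_ne_empty hSe)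
        omega
      exact CycleAux.starts_blocksOf hge
  unfold Q2
  rw [hconn, Finset.sum_image (fun S hS T hT h => by
    rw [← hstar S ((hmemA S).mp hS), ← hstar T ((hmemA T).mp hT), h])]
  have hterm : ∀ S ∈ A,
      x ^ (CycleAux.blocksOf S).card *
          y ^ (intraEdges (SimpleGraph.cycleGraph n) (CycleAux.blocksOf S)).card
        = x ^ S.card * y ^ (n - S.card) + (if S = ∅ then (x - 1) * y ^ n else 0) := by
    intro S hS
    have hS1 : S.card ≠ 1 := (hmemA S).mp hS
    have hintra := CycleAux.intra_card (P := CycleAux.blocksOf S) hn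
    rw [hstar S hS1] at hintra
    rcases eq_or_ne S ∅ with rfl | hSe
    · rw [hintra, CycleAux.blocksOf_empty]
      simp only [Finset.card_singleton, Finset.card_empty, if_pos rfl, Nat.sub_zero, pow_one,
        pow_zero, one_mul, if_true]
      ring
    · rw [hintra, CycleAux.blocksOf_card (Finset.nonempty_of_ne_empty hSe), if_neg hSe, add_zero]
  rw [Finset.sum_congr rfl hterm, Finset.sum_add_distrib]
  have hif : (∑ S ∈ A, if S = ∅ then (x - 1) * y ^ n else 0) = (x - 1) * y ^ n := by
    rw [Finset.sum_ite_eq' A (∅ : Finset (Fin n)) (fun _ => (x - 1) * y ^ n)]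
    rw [if_pos (by simp [hA])]
  rw [hif]
  have hsplit : (∑ S ∈ Finset.univ.filter (fun S : Finset (Fin n) => S.card = 1),
        x ^ S.card * y ^ (n - S.card))
      + (∑ S ∈ A, x ^ S.card * y ^ (n - S.card))
      = ∑ S : Finset (Fin n), x ^ S.card * y ^ (n - S.card) := by
    rw [hA]
    exact Finset.sum_filter_add_sum_filter_not _ _ _
  have htotal : (∑ S : Finset (Fin n), x ^ S.card * y ^ (n - S.card)) = (x + y) ^ n := by
    have := Fintype.sum_pow_mul_eq_add_pow (Fin n) x y
    rwa [Fintype.card_fin] at this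
  have hones : Finset.univ.filter (fun S : Finset (Fin n) => S.card = 1)
      = Finset.univ.image (fun a : Fin n => ({a} : Finset (Fin n))) := by
    ext S
    simp only [Finset.mem_filter, Finset.mem_univ, true_and, Finset.mem_image,
      Finset.card_eq_one]
    constructor
    · rintro ⟨a, rfl⟩; exact ⟨a, rfl⟩
    · rintro ⟨a, rfl⟩; exact ⟨a, rfl⟩
  have hsum1 : (∑ S ∈ Finset.univ.filter (fun S : Finset (Fin n) => S.card = 1),
        x ^ S.card * y ^ (n - S.card)) = (n : ℤ) * (x * y ^ (n - 1)) := by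
    rw [hones, Finset.sum_image (fun a _ b _ h => Finset.singleton_injective h)]
    simp only [Finset.card_singleton, pow_one]
    rw [Finset.sum_const, Finset.card_univ, Fintype.card_fin, nsmul_eq_mul]
  have hA_sum : (∑ S ∈ A, x ^ S.card * y ^ (n - S.card))
      = (x + y) ^ n - (n : ℤ) * (x * y ^ (n - 1)) := by
    rw [← htotal, ← hsplit, hsum1]; ring
  rw [hA_sum]
  have hy : y ^ (n - 1) * y = y ^ n := by
    rw [← pow_succ]
    congr 1
    omega
  linear_combination (-x) * hy
end
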